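/- arXiv:2504.13543 — 6 statements merged into one kernel-verified Lean document; each statement's English description precedes it below -/
import Mathlib

section
/- If X = (x_n) is a determining sequence for K, then every f ∈ H_{K,X} has a unique representation f = Σ_{k∈ℕ} c_k K(·,x_k) with coefficient sequence c = (c_k) ∈ ℓ²(ℕ), and conversely every such series with ℓ² coefficients converges in H_{K,X}. -/
open scoped RealInnerProductSpace

/-- A continuous symmetric kernel is positive definite if all kernel matrices
at finite sets of pairwise distinct points are (symmetric) positive definite. -/
def IsPDKernel {E : Type*} [TopologicalSpace E] (K : E → E → ℝ) : Prop :=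
  Continuous (fun p : E × E => K p.1 p.2) ∧ (∀ x y, K x y = K y x) ∧
  ∀ (n : ℕ) (x : Fin n → E), Function.Injective x →
    (Matrix.of fun i j => K (x i) (x j)).PosDef

/-- A family (v i) is a Riesz basis of the closed subspace S of a Hilbert space if it lies
in S and is the image of the canonical orthonormal basis of ℓ² under a bounded invertible
operator onto S. -/
def IsRieszBasisOf {ι H : Type*} [DecidableEq ι] [NormedAddCommGroup H]
    [InnerProductSpace ℝ H] (S : Submodule ℝ H) (v : ι → H) : Prop :=
  (∀ i, v i ∈ S) ∧
  ∃ T : (lp (fun _ : ι => ℝ) 2) ≃L[ℝ] S, ∀ i, (T (lp.single 2 i 1) : H) = v i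

section Aux
variable {H : Type*} [NormedAddCommGroup H] [InnerProductSpace ℝ H] [CompleteSpace H]
variable (k : ℕ → H) (T : lp (fun _ : ℕ => ℝ) 2 →L[ℝ] lp (fun _ : ℕ => ℝ) 2)
variable (hT : ∀ (c : lp (fun _ : ℕ => ℝ) 2) (j : ℕ),
  HasSum (fun m => ⟪k j, k m⟫ * c m) (T c j))

-- squares summable
lemma aux_sq (c : lp (fun _ : ℕ => ℝ) 2) : Summable (fun m => (c m)^2) := by
  have := (lp.memℓp c).summable (p := 2) (by norm_num)
  simpa [Real.rpow_natCast, sq_abs, abs_pow] using this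

lemma aux_normsq (c : lp (fun _ : ℕ => ℝ) 2) : ‖c‖^2 = ∑' m, (c m)^2 := by
  rw [← real_inner_self_eq_norm_sq, lp.inner_eq_tsum]
  simp [RCLike.inner_apply, sq]

include hT in
-- finite sum bound
lemma aux_finbound (c : lp (fun _ : ℕ => ℝ) 2) (t : Finset ℕ) :
    ‖∑ m ∈ t, c m • k m‖^2 ≤ ‖T‖ * ∑ m ∈ t, (c m)^2 := by
  classical
  set ct : lp (fun _ : ℕ => ℝ) 2 := ∑ m ∈ t, lp.single 2 m (c m) with hct
  have hcoe : ∀ j, ct j = if j ∈ t then c j else 0 := by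
    intro j
    rw [hct, lp.coeFn_sum, Finset.sum_apply]
    by_cases hj : j ∈ t
    · rw [if_pos hj, Finset.sum_eq_single_of_mem j hj]
      · exact lp.single_apply_self (E := fun _ : ℕ => ℝ) 2 j (c j)
      · intro b _ hb
        exact lp.single_apply_ne (E := fun _ : ℕ => ℝ) 2 b (c b) hb.symm
    · rw [if_neg hj, Finset.sum_eq_zero]
      intro b hb
      exact lp.single_apply_ne (E := fun _ : ℕ => ℝ) 2 b (c b)
        (fun h => hj (by rw [h]; exact hb))
  have hnorm : ‖ct‖^2 = ∑ m ∈ t, (c m)^2 := by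
    rw [aux_normsq, tsum_eq_sum (s := t) (by intro b hb; rw [hcoe b, if_neg hb]; ring)]
    refine Finset.sum_congr rfl fun m hm => by rw [hcoe m, if_pos hm]
  have hTct : ∀ j, T ct j = ∑ m ∈ t, ⟪k j, k m⟫ * c m := by
    intro j
    refine (hT ct j).unique ?_
    have h0 : ∀ b ∉ t, ⟪k j, k b⟫ * ct b = 0 := by
      intro b hb; rw [hcoe b, if_neg hb, mul_zero]
    have h1 : HasSum (fun b => ⟪k j, k b⟫ * ct b) (∑ m ∈ t, ⟪k j, k m⟫ * ct m) :=
      hasSum_sum_of_ne_finset_zero h0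
    rwa [Finset.sum_congr rfl (fun m hm => by rw [hcoe m, if_pos hm] :
      ∀ m ∈ t, ⟪k j, k m⟫ * ct m = ⟪k j, k m⟫ * c m)] at h1
  have hinner : ⟪ct, T ct⟫ = ∑ j ∈ t, c j * ∑ m ∈ t, ⟪k j, k m⟫ * c m := by
    rw [lp.inner_eq_tsum]
    rw [tsum_eq_sum (s := t) (by
      intro b hb
      simp only [RCLike.inner_apply, conj_trivial]
      rw [hcoe b, if_neg hb, mul_zero])]
    refine Finset.sum_congr rfl fun j hj => ?_
    simp only [RCLike.inner_apply, conj_trivial]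
    rw [hcoe j, if_pos hj, hTct j, mul_comm]
  have hlhs : ‖∑ m ∈ t, c m • k m‖^2 = ⟪ct, T ct⟫ := by
    rw [← real_inner_self_eq_norm_sq, hinner]
    simp only [sum_inner, inner_sum, real_inner_smul_left, real_inner_smul_right,
      Finset.mul_sum]
    exact Finset.sum_congr rfl fun j _ => Finset.sum_congr rfl fun m _ => by rw [real_inner_comm (k m)]; ring
  rw [hlhs]
  calc ⟪ct, T ct⟫ ≤ ‖ct‖ * ‖T ct‖ := real_inner_le_norm _ _
    _ ≤ ‖ct‖ * (‖T‖ * ‖ct‖) := by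
        have := T.le_opNorm ct
        exact mul_le_mul_of_nonneg_left this (norm_nonneg _)
    _ = ‖T‖ * ‖ct‖^2 := by ring
    _ = ‖T‖ * ∑ m ∈ t, (c m)^2 := by rw [hnorm]


include hT in
lemma aux_summable (c : lp (fun _ : ℕ => ℝ) 2) : Summable (fun m => c m • k m) := by
  rw [summable_iff_vanishing_norm]
  intro ε hε
  have hTnn : (0:ℝ) ≤ ‖T‖ := norm_nonneg _
  have hε' : 0 < ε^2 / (‖T‖ + 1) := div_pos (by positivity) (by linarith)
  obtain ⟨s, hs⟩ := summable_iff_vanishing_norm.mp (aux_sq c) _ hε'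
  refine ⟨s, fun t ht => ?_⟩
  have h1 := aux_finbound k T hT c t
  have h2 : ∑ m ∈ t, (c m)^2 < ε^2 / (‖T‖ + 1) := by
    have := hs t ht
    calc ∑ m ∈ t, (c m)^2 ≤ ‖∑ m ∈ t, (c m)^2‖ := le_abs_self _
      _ < _ := this
  have h3 : ‖∑ m ∈ t, c m • k m‖^2 < ε^2 := by
    calc ‖∑ m ∈ t, c m • k m‖^2 ≤ ‖T‖ * ∑ m ∈ t, (c m)^2 := h1
      _ ≤ (‖T‖ + 1) * ∑ m ∈ t, (c m)^2 := by
          have : (0:ℝ) ≤ ∑ m ∈ t, (c m)^2 := Finset.sum_nonneg fun m _ => sq_nonneg _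
          nlinarith
      _ < (‖T‖ + 1) * (ε^2 / (‖T‖ + 1)) := by
          exact mul_lt_mul_of_pos_left h2 (by linarith)
      _ = ε^2 := by
          rw [mul_comm]
          exact div_mul_cancel₀ _ (ne_of_gt (by positivity))
  exact lt_of_pow_lt_pow_left₀ 2 (le_of_lt hε) h3

include hT in
lemma aux_inner_hasSum (c : lp (fun _ : ℕ => ℝ) 2) {g : H}
    (hg : HasSum (fun m => c m • k m) g) (j : ℕ) : T c j = ⟪k j, g⟫ := by
  refine (hT c j).unique ?_
  have := hg.mapL (innerSL ℝ (k j))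
  simpa only [innerSL_apply_apply, real_inner_smul_right, mul_comm] using this

include hT in
lemma aux_inner_SS (a b : lp (fun _ : ℕ => ℝ) 2) {ga gb : H}
    (ha : HasSum (fun m => a m • k m) ga) (hb : HasSum (fun m => b m • k m) gb) :
    ⟪ga, gb⟫ = ⟪T a, b⟫ := by
  have h1 := hb.mapL (innerSL ℝ ga)
  have h2 : HasSum (fun m => (T a) m * b m) ⟪T a, b⟫ := by
    simpa [RCLike.inner_apply, mul_comm] using lp.hasSum_inner (𝕜 := ℝ) (T a) b
  refine h1.unique ?_
  have heq : ∀ m, (innerSL ℝ ga) (b m • k m) = (T a) m * b m := by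
    intro m
    rw [innerSL_apply_apply, real_inner_smul_right, aux_inner_hasSum k T hT a ha m,
      real_inner_comm]
    ring
  simpa only [heq] using h2


include hT in
lemma aux_norm_le (c : lp (fun _ : ℕ => ℝ) 2) :
    ‖∑' m, c m • k m‖ ≤ Real.sqrt ‖T‖ * ‖c‖ := by
  have hS := (aux_summable k T hT c).hasSum
  have key : ∀ t : Finset ℕ, ‖∑ m ∈ t, c m • k m‖ ≤ Real.sqrt ‖T‖ * ‖c‖ := by
    intro t
    have h1 : ‖∑ m ∈ t, c m • k m‖^2 ≤ (Real.sqrt ‖T‖ * ‖c‖)^2 := by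
      have h2 : ∑ m ∈ t, (c m)^2 ≤ ‖c‖^2 := by
        rw [aux_normsq]
        exact Summable.sum_le_tsum t (fun m _ => sq_nonneg _) (aux_sq c)
      calc ‖∑ m ∈ t, c m • k m‖^2 ≤ ‖T‖ * ∑ m ∈ t, (c m)^2 := aux_finbound k T hT c t
        _ ≤ ‖T‖ * ‖c‖^2 := mul_le_mul_of_nonneg_left h2 (norm_nonneg _)
        _ = (Real.sqrt ‖T‖ * ‖c‖)^2 := by
            rw [mul_pow, Real.sq_sqrt (norm_nonneg _)]
    exact le_of_pow_le_pow_left₀ two_ne_zero (by positivity) h1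
  exact le_of_tendsto' hS.norm key

include hT in
lemma aux_main (hTbij : Function.Bijective T) :
    ∃ S : lp (fun _ : ℕ => ℝ) 2 →L[ℝ] H,
      (∀ c, HasSum (fun m => c m • k m) (S c)) ∧ IsClosed (Set.range S) := by
  classical
  have hsum := aux_summable k T hT
  set F : lp (fun _ : ℕ => ℝ) 2 →ₗ[ℝ] H :=
    { toFun := fun c => ∑' m, c m • k m
      map_add' := fun a b => by
        have he : (fun m => (a + b) m • k m) = fun m => a m • k m + b m • k m := by
          funext m; rw [lp.coeFn_add, Pi.add_apply, add_smul]
        simp only [he]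
        exact ((hsum a).hasSum.add (hsum b).hasSum).tsum_eq
      map_smul' := fun r a => by
        have he : (fun m => (r • a) m • k m) = fun m => r • (a m • k m) := by
          funext m
          rw [lp.coeFn_smul, Pi.smul_apply, smul_smul, smul_eq_mul]
        simp only [he, RingHom.id_apply]
        exact ((hsum a).hasSum.const_smul r).tsum_eq } with hF
  have hbound : ∀ c, ‖F c‖ ≤ Real.sqrt ‖T‖ * ‖c‖ := fun c => aux_norm_le k T hT c
  set S : lp (fun _ : ℕ => ℝ) 2 →L[ℝ] H := F.mkContinuous (Real.sqrt ‖T‖) hbound with hSdef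
  have hS : ∀ c, HasSum (fun m => c m • k m) (S c) := fun c => (hsum c).hasSum
  have hSnorm : ∀ c, ‖S c‖ ≤ Real.sqrt ‖T‖ * ‖c‖ := hbound
  -- inverse of T
  have hker : T.ker = ⊥ := by rw [LinearMap.ker_eq_bot]; exact hTbij.1
  have hrange : T.range = ⊤ := LinearMap.range_eq_top.mpr hTbij.2
  set e := ContinuousLinearEquiv.ofBijective T hker hrange with he
  have heval : ∀ c, (e : lp (fun _ : ℕ => ℝ) 2 → lp (fun _ : ℕ => ℝ) 2) c = T c := by
    intro c
    rw [he, ContinuousLinearEquiv.coeFn_ofBijective]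
  have h1 : ∀ c, ‖T c‖ ≤ Real.sqrt ‖T‖ * ‖S c‖ := by
    intro c
    rcases eq_or_lt_of_le (norm_nonneg (T c)) with hz | hz
    · rw [← hz]; positivity
    have key : ‖T c‖ * ‖T c‖ ≤ (Real.sqrt ‖T‖ * ‖S c‖) * ‖T c‖ := by
      calc ‖T c‖ * ‖T c‖ = ⟪T c, T c⟫ := (real_inner_self_eq_norm_mul_norm _).symm
        _ = ⟪S c, S (T c)⟫ := (aux_inner_SS k T hT c (T c) (hS c) (hS (T c))).symm
        _ ≤ ‖S c‖ * ‖S (T c)‖ := real_inner_le_norm _ _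
        _ ≤ ‖S c‖ * (Real.sqrt ‖T‖ * ‖T c‖) :=
            mul_le_mul_of_nonneg_left (hSnorm (T c)) (norm_nonneg _)
        _ = (Real.sqrt ‖T‖ * ‖S c‖) * ‖T c‖ := by ring
    exact le_of_mul_le_mul_right key hz
  set C : ℝ := ‖(e.symm : lp (fun _ : ℕ => ℝ) 2 →L[ℝ] lp (fun _ : ℕ => ℝ) 2)‖ * Real.sqrt ‖T‖
    with hC
  have hCnn : 0 ≤ C := by positivity
  have h2 : ∀ c, ‖c‖ ≤ C * ‖S c‖ := by
    intro c
    have h3 : e.symm (T c) = c := by rw [← heval c]; exact e.symm_apply_apply c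
    calc ‖c‖ = ‖e.symm (T c)‖ := by rw [h3]
      _ ≤ ‖(e.symm : lp (fun _ : ℕ => ℝ) 2 →L[ℝ] lp (fun _ : ℕ => ℝ) 2)‖ * ‖T c‖ :=
          (e.symm : lp (fun _ : ℕ => ℝ) 2 →L[ℝ] lp (fun _ : ℕ => ℝ) 2).le_opNorm (T c)
      _ ≤ ‖(e.symm : lp (fun _ : ℕ => ℝ) 2 →L[ℝ] lp (fun _ : ℕ => ℝ) 2)‖ *
            (Real.sqrt ‖T‖ * ‖S c‖) :=
          mul_le_mul_of_nonneg_left (h1 c) (norm_nonneg _)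
      _ = C * ‖S c‖ := by rw [hC]; ring
  have hanti : AntilipschitzWith C.toNNReal S := by
    refine S.antilipschitz_of_bound fun c => ?_
    rw [Real.coe_toNNReal C hCnn]
    exact h2 c
  exact ⟨S, hS, hanti.isClosed_range S.uniformContinuous⟩

end Aux

/-- For a determining sequence, every f ∈ H_{K,X} has a unique ℓ² coefficient sequence
with f = Σ c_k K(·,x_k), and conversely every ℓ² series converges to an element of H_{K,X}. -/
theorem stmt_9 {d : ℕ}
    (K : EuclideanSpace ℝ (Fin d) → EuclideanSpace ℝ (Fin d) → ℝ)
    (hK : IsPDKernel K)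
    {H : Type*} [NormedAddCommGroup H] [InnerProductSpace ℝ H] [CompleteSpace H]
    (k : EuclideanSpace ℝ (Fin d) → H)
    (hk : ∀ x y, ⟪k x, k y⟫ = K x y)
    (hdense : (Submodule.span ℝ (Set.range k)).topologicalClosure = ⊤)
    (x : ℕ → EuclideanSpace ℝ (Fin d)) (hx : Function.Injective x)
    -- X is determining: the infinite kernel matrix A_{K,X} acts as a bounded
    -- bijective operator T on ℓ²(ℕ)
    (T : lp (fun _ : ℕ => ℝ) 2 →L[ℝ] lp (fun _ : ℕ => ℝ) 2)
    (hTbij : Function.Bijective T)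
    (hT : ∀ (c : lp (fun _ : ℕ => ℝ) 2) (j : ℕ),
      HasSum (fun m => K (x j) (x m) * c m) (T c j)) :
    (∀ f ∈ (Submodule.span ℝ (Set.range fun n => k (x n))).topologicalClosure,
      ∃! c : lp (fun _ : ℕ => ℝ) 2, HasSum (fun m => c m • k (x m)) f) ∧
    (∀ c : lp (fun _ : ℕ => ℝ) 2,
      ∃ f ∈ (Submodule.span ℝ (Set.range fun n => k (x n))).topologicalClosure,
        HasSum (fun m => c m • k (x m)) f) := by
  classical
  set κ : ℕ → H := fun n => k (x n) with hκ
  have hTκ : ∀ (c : lp (fun _ : ℕ => ℝ) 2) (j : ℕ),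
      HasSum (fun m => ⟪κ j, κ m⟫ * c m) (T c j) := by
    intro c j
    simp only [hκ, hk]
    exact hT c j
  obtain ⟨S, hS, hclosed⟩ := aux_main κ T hTκ hTbij
  set M := (Submodule.span ℝ (Set.range fun n => k (x n))).topologicalClosure with hM
  -- every S c lies in M
  have hmem : ∀ c, S c ∈ M := by
    intro c
    have hMc : IsClosed (M : Set H) := Submodule.isClosed_topologicalClosure _
    refine hMc.mem_of_tendsto (hS c) (Filter.Eventually.of_forall fun t => ?_)
    exact Submodule.sum_mem _ fun m _ => Submodule.smul_mem _ _
      (Submodule.le_topologicalClosure _ (Submodule.subset_span ⟨m, rfl⟩))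
  -- uniqueness of coefficients
  have huniq : ∀ (c c' : lp (fun _ : ℕ => ℝ) 2) (f : H),
      HasSum (fun m => c m • κ m) f → HasSum (fun m => c' m • κ m) f → c = c' := by
    intro c c' f h1 h2
    have hd : HasSum (fun m => (c - c') m • κ m) 0 := by
      have h3 := h1.sub h2
      rw [sub_self] at h3
      have he : (fun m => (c - c') m • κ m) = fun m => c m • κ m - c' m • κ m := by
        funext m; rw [lp.coeFn_sub, Pi.sub_apply, sub_smul]
      rw [he]
      exact h3
    have hT0 : T (c - c') = 0 := by
      apply lp.ext
      funext j
      rw [aux_inner_hasSum κ T hTκ (c - c') hd j, inner_zero_right]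
      simp
    have : c - c' = 0 := hTbij.1 (by rw [hT0, map_zero])
    exact sub_eq_zero.mp this
  -- S (single n) = κ n
  have hsingle : ∀ n, S (lp.single 2 n 1) = κ n := by
    intro n
    have he : (fun m => ((lp.single 2 n 1 : lp (fun _ : ℕ => ℝ) 2)) m • κ m) =
        fun m => if m = n then κ n else 0 := by
      funext m
      rcases eq_or_ne m n with rfl | h
      · rw [lp.single_apply_self (E := fun _ : ℕ => ℝ), if_pos rfl, one_smul]
      · rw [lp.single_apply_ne (E := fun _ : ℕ => ℝ) 2 n 1 h, if_neg h, zero_smul]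
    have h2 := hS (lp.single 2 n 1)
    rw [he] at h2
    exact h2.unique (hasSum_ite_eq n (κ n))
  -- M is contained in the range of S
  have hspan : Submodule.span ℝ (Set.range fun n => k (x n)) ≤ S.range := by
    refine Submodule.span_le.mpr ?_
    rintro _ ⟨n, rfl⟩
    exact ⟨lp.single 2 n 1, hsingle n⟩
  have hcl : IsClosed ((S.range : Submodule ℝ H) : Set H) := by
    rw [LinearMap.coe_range]
    exact hclosed
  have hle : M ≤ S.range :=
    Submodule.topologicalClosure_minimal _ hspan hcl
  constructor
  · intro f hf
    obtain ⟨c, hc⟩ := hle hf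
    have hc' : S c = f := hc
    refine ⟨c, hc' ▸ hS c, fun c' h' => huniq c' c f h' (hc' ▸ hS c)⟩
  · intro c
    exact ⟨S c, hmem c, hS c⟩
end

section
/- Let X be a determining sequence for K and c ∈ ℓ²(ℕ). If f : ℝ^d → ℝ is defined pointwise by f(x) = Σ_{k∈ℕ} c_k K(x_k, x), then there is a unique element f̃ ∈ H_{K,X} satisfying ⟨f̃, K(·,x)⟩_K = f(x) for all x ∈ ℝ^d. -/
open scoped RealInnerProductSpace

/-- If f(x) = Σ c_k K(x_k, x) pointwise with c ∈ ℓ², then there is a unique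
f̃ ∈ H_{K,X} with ⟪f̃, K(·,x)⟫_K = f(x) for all x. -/
theorem stmt_10 {d : ℕ}
    (K : EuclideanSpace ℝ (Fin d) → EuclideanSpace ℝ (Fin d) → ℝ)
    (hK : IsPDKernel K)
    {H : Type*} [NormedAddCommGroup H] [InnerProductSpace ℝ H] [CompleteSpace H]
    (k : EuclideanSpace ℝ (Fin d) → H)
    (hk : ∀ x y, ⟪k x, k y⟫ = K x y)
    (hdense : (Submodule.span ℝ (Set.range k)).topologicalClosure = ⊤)
    (x : ℕ → EuclideanSpace ℝ (Fin d)) (hx : Function.Injective x)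
    -- X is determining: the infinite kernel matrix A_{K,X} acts as a bounded
    -- bijective operator T on ℓ²(ℕ)
    (T : lp (fun _ : ℕ => ℝ) 2 →L[ℝ] lp (fun _ : ℕ => ℝ) 2)
    (hTbij : Function.Bijective T)
    (hT : ∀ (c : lp (fun _ : ℕ => ℝ) 2) (j : ℕ),
      HasSum (fun m => K (x j) (x m) * c m) (T c j))
    (c : lp (fun _ : ℕ => ℝ) 2) (f : EuclideanSpace ℝ (Fin d) → ℝ)
    (hf : ∀ y, HasSum (fun m => c m * K (x m) y) (f y)) :
    ∃! ft, ft ∈ (Submodule.span ℝ (Set.range fun n => k (x n))).topologicalClosure ∧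
      ∀ y, ⟪ft, k y⟫ = f y := by
  classical
  set e : ℕ → H := fun n => k (x n) with he
  -- summability of squares of c
  have hc2 : Summable (fun m => (c m) ^ 2) := by
    have h := (lp.memℓp c).summable (p := 2) (by norm_num)
    refine h.congr fun m => ?_
    simp [Real.rpow_natCast, sq_abs]
  -- key bound on finite partial sums
  have key : ∀ F : Finset ℕ,
      ‖∑ m ∈ F, c m • e m‖ ^ 2 ≤ (‖T‖ + 1) * ∑ m ∈ F, (c m) ^ 2 := by
    intro F
    set cF : lp (fun _ : ℕ => ℝ) 2 := ∑ m ∈ F, lp.single 2 m (c m) with hcFdef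
    have hcF : ∀ j, cF j = if j ∈ F then c j else 0 := by
      intro j
      rw [hcFdef, lp.coeFn_sum, Finset.sum_apply]
      simp only [lp.single_apply, eq_rec_constant, dite_eq_ite]
      simp [Pi.single_apply, Finset.sum_ite_eq, Finset.sum_ite_eq']
    have hTcF : ∀ j, T cF j = ∑ m ∈ F, K (x j) (x m) * c m := by
      intro j
      have h1 : HasSum (fun m => K (x j) (x m) * cF m)
          (∑ m ∈ F, K (x j) (x m) * cF m) :=
        hasSum_sum_of_ne_finset_zero fun m hm => by rw [hcF, if_neg hm, mul_zero]
      rw [(hT cF j).unique h1]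
      exact Finset.sum_congr rfl fun m hm => by rw [hcF, if_pos hm]
    -- norm of cF squared
    have hncF : ‖cF‖ ^ 2 = ∑ j ∈ F, (c j) ^ 2 := by
      rw [← real_inner_self_eq_norm_sq]
      have h1 : HasSum (fun j => cF j * cF j) (∑ j ∈ F, cF j * cF j) :=
        hasSum_sum_of_ne_finset_zero fun j hj => by rw [hcF, if_neg hj, mul_zero]
      have h2 := lp.hasSum_inner (𝕜 := ℝ) cF cF
      have h3 : (fun j => ⟪cF j, cF j⟫) = fun j => cF j * cF j := by
        funext j; simp [RCLike.inner_apply]; ring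
      rw [h3] at h2
      rw [h2.unique h1]
      exact Finset.sum_congr rfl fun j hj => by rw [hcF, if_pos hj, sq]
    -- the inner product ⟪T cF, cF⟫ equals the double sum
    have hinner : ⟪T cF, cF⟫ = ∑ j ∈ F, (∑ m ∈ F, K (x j) (x m) * c m) * c j := by
      have h1 : HasSum (fun j => T cF j * cF j) (∑ j ∈ F, T cF j * cF j) :=
        hasSum_sum_of_ne_finset_zero fun j hj => by rw [hcF, if_neg hj, mul_zero]
      have h2 := lp.hasSum_inner (𝕜 := ℝ) (T cF) cF
      have h3 : (fun j => ⟪T cF j, cF j⟫) = fun j => T cF j * cF j := by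
        funext j; simp [RCLike.inner_apply]; ring
      rw [h3] at h2
      rw [h2.unique h1]
      exact Finset.sum_congr rfl fun j hj => by rw [hcF, if_pos hj, hTcF]
    -- norm of partial sum squared as double sum
    have hns : ‖∑ m ∈ F, c m • e m‖ ^ 2
        = ∑ j ∈ F, (∑ m ∈ F, K (x j) (x m) * c m) * c j := by
      rw [← real_inner_self_eq_norm_sq, sum_inner]
      refine Finset.sum_congr rfl fun j hj => ?_
      rw [real_inner_smul_left, inner_sum, mul_comm]
      congr 1
      refine Finset.sum_congr rfl fun m hm => ?_
      rw [real_inner_smul_right, he]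
      rw [hk, mul_comm]
    have h4 := real_inner_le_norm (T cF) cF
    have h5 := T.le_opNorm cF
    have h6 : (0:ℝ) ≤ ‖cF‖ := norm_nonneg _
    calc ‖∑ m ∈ F, c m • e m‖ ^ 2 = ⟪T cF, cF⟫ := hns.trans hinner.symm
      _ ≤ ‖T cF‖ * ‖cF‖ := h4
      _ ≤ (‖T‖ * ‖cF‖) * ‖cF‖ := mul_le_mul_of_nonneg_right h5 h6
      _ = ‖T‖ * ‖cF‖ ^ 2 := by ring
      _ ≤ (‖T‖ + 1) * ‖cF‖ ^ 2 := by nlinarith [sq_nonneg ‖cF‖]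
      _ = (‖T‖ + 1) * ∑ m ∈ F, (c m) ^ 2 := by rw [hncF]
  -- summability of the series in H
  have hsummable : Summable (fun m => c m • e m) := by
    rw [summable_iff_vanishing_norm]
    intro ε hε
    have hT0 : (0:ℝ) < ‖T‖ + 1 := by
      have := norm_nonneg T; linarith
    have hδ : 0 < ε ^ 2 / (‖T‖ + 1) := div_pos (pow_pos hε 2) hT0
    obtain ⟨s, hs⟩ := summable_iff_vanishing_norm.mp hc2 (ε ^ 2 / (‖T‖ + 1)) hδ
    refine ⟨s, fun t ht => ?_⟩
    have h1 := key t
    have h2 := hs t ht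
    have h3 : ∑ m ∈ t, (c m) ^ 2 < ε ^ 2 / (‖T‖ + 1) :=
      lt_of_le_of_lt (le_abs_self _) (by rwa [Real.norm_eq_abs] at h2)
    have h5 : ‖∑ m ∈ t, c m • e m‖ ^ 2 < ε ^ 2 := by
      calc ‖∑ m ∈ t, c m • e m‖ ^ 2 ≤ (‖T‖ + 1) * ∑ m ∈ t, (c m) ^ 2 := h1
        _ < (‖T‖ + 1) * (ε ^ 2 / (‖T‖ + 1)) := by
            exact mul_lt_mul_of_pos_left h3 hT0
        _ = ε ^ 2 := mul_div_cancel₀ _ hT0.ne'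
    nlinarith [norm_nonneg (∑ m ∈ t, c m • e m)]
  obtain ⟨ft, hft⟩ := hsummable
  refine ⟨ft, ⟨?_, ?_⟩, ?_⟩
  · -- membership in the closure of the span
    have hmem : ∀ F : Finset ℕ,
        (∑ m ∈ F, c m • e m) ∈ Submodule.span ℝ (Set.range fun n => k (x n)) :=
      fun F => Submodule.sum_mem _ fun m _ =>
        Submodule.smul_mem _ _ (Submodule.subset_span ⟨m, rfl⟩)
    have : ft ∈ closure ((Submodule.span ℝ (Set.range fun n => k (x n)) : Set H)) :=
      mem_closure_of_tendsto hft (Filter.Eventually.of_forall hmem)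
    exact this
  · -- inner product identity
    intro y
    have h2 : HasSum (fun m => ⟪c m • e m, k y⟫) ⟪ft, k y⟫ :=
      hft.mapL ((innerSL ℝ (E := H)).flip (k y))
    have h3 : (fun m => ⟪c m • e m, k y⟫) = fun m => c m * K (x m) y := by
      funext m; rw [real_inner_smul_left, he, hk]
    rw [h3] at h2
    exact h2.unique (hf y)
  · -- uniqueness
    rintro g ⟨hgmem, hg⟩
    have hftmem : ft ∈ (Submodule.span ℝ (Set.range fun n => k (x n))).topologicalClosure := by
      have hmem : ∀ F : Finset ℕ,
          (∑ m ∈ F, c m • e m) ∈ Submodule.span ℝ (Set.range fun n => k (x n)) :=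
        fun F => Submodule.sum_mem _ fun m _ =>
          Submodule.smul_mem _ _ (Submodule.subset_span ⟨m, rfl⟩)
      exact mem_closure_of_tendsto hft (Filter.Eventually.of_forall hmem)
    have hftinner : ∀ y, ⟪ft, k y⟫ = f y := by
      intro y
      have h2 : HasSum (fun m => ⟪c m • e m, k y⟫) ⟪ft, k y⟫ :=
        hft.mapL ((innerSL ℝ (E := H)).flip (k y))
      have h3 : (fun m => ⟪c m • e m, k y⟫) = fun m => c m * K (x m) y := by
        funext m; rw [real_inner_smul_left, he, hk]
      rw [h3] at h2
      exact h2.unique (hf y)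
    -- g - ft is orthogonal to all k y, hence to the dense span, hence zero
    have horth : ∀ v ∈ Submodule.span ℝ (Set.range k), ⟪v, g - ft⟫ = 0 := by
      intro v hv
      induction hv using Submodule.span_induction with
      | mem v hv =>
        obtain ⟨y, rfl⟩ := hv
        rw [real_inner_comm, inner_sub_left, hg y, hftinner y, sub_self]
      | zero => rw [inner_zero_left]
      | add u v _ _ hu hv => rw [inner_add_left, hu, hv, add_zero]
      | smul a u _ hu => rw [real_inner_smul_left, hu, mul_zero]
    have hbot : (Submodule.span ℝ (Set.range k))ᗮ = ⊥ :=
      Submodule.topologicalClosure_eq_top_iff.mp hdense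
    have : g - ft ∈ (Submodule.span ℝ (Set.range k))ᗮ :=
      Submodule.mem_orthogonal _ _ |>.mpr horth
    rw [hbot, Submodule.mem_bot, sub_eq_zero] at this
    exact this
end

section
/- If X is a determining sequence for K and f = Σ_k c_k K(·,x_k) ∈ H_{K,X} with c ∈ ℓ², then the sample sequence f_X = (f(x_n))_{n∈ℕ} lies in ℓ²(ℕ), satisfies f_X = A_{K,X} c, and determines f uniquely via c = A_{K,X}^{-1} f_X. -/
open scoped RealInnerProductSpace

/-- For f = Σ c_k K(·,x_k) with c ∈ ℓ², the sample sequence f_X = (f(x_n)) lies in ℓ²,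
satisfies f_X = A_{K,X} c, and determines f uniquely (c = A_{K,X}⁻¹ f_X). -/
theorem stmt_11 {d : ℕ}
    (K : EuclideanSpace ℝ (Fin d) → EuclideanSpace ℝ (Fin d) → ℝ)
    (hK : IsPDKernel K)
    {H : Type*} [NormedAddCommGroup H] [InnerProductSpace ℝ H] [CompleteSpace H]
    (k : EuclideanSpace ℝ (Fin d) → H)
    (hk : ∀ x y, ⟪k x, k y⟫ = K x y)
    (hdense : (Submodule.span ℝ (Set.range k)).topologicalClosure = ⊤)
    (x : ℕ → EuclideanSpace ℝ (Fin d)) (hx : Function.Injective x)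
    -- X is determining: the infinite kernel matrix A_{K,X} acts as a bounded
    -- bijective operator T on ℓ²(ℕ)
    (T : lp (fun _ : ℕ => ℝ) 2 →L[ℝ] lp (fun _ : ℕ => ℝ) 2)
    (hTbij : Function.Bijective T)
    (hT : ∀ (c : lp (fun _ : ℕ => ℝ) 2) (j : ℕ),
      HasSum (fun m => K (x j) (x m) * c m) (T c j))
    (c : lp (fun _ : ℕ => ℝ) 2) (f : H) (hf : HasSum (fun m => c m • k (x m)) f) :
    ∃ fX : lp (fun _ : ℕ => ℝ) 2,
      (∀ m, fX m = ⟪f, k (x m)⟫) ∧ fX = T c ∧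
      ∀ (g : H) (c' : lp (fun _ : ℕ => ℝ) 2), HasSum (fun m => c' m • k (x m)) g →
        (∀ m, ⟪g, k (x m)⟫ = ⟪f, k (x m)⟫) → g = f := by
  have key : ∀ (c' : lp (fun _ : ℕ => ℝ) 2) (g : H),
      HasSum (fun m => c' m • k (x m)) g → ∀ j, T c' j = ⟪g, k (x j)⟫ := by
    intro c' g hg j
    have h1 : HasSum (fun m => ⟪k (x j), c' m • k (x m)⟫) ⟪k (x j), g⟫ :=
      (innerSL ℝ (k (x j))).hasSum hg
    have h2 : HasSum (fun m => K (x j) (x m) * c' m) ⟪k (x j), g⟫ := by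
      convert h1 using 2 with m
      rw [real_inner_smul_right, ← hk, mul_comm]
    rw [real_inner_comm]
    exact (hT c' j).unique h2
  refine ⟨T c, fun m => key c f hf m, rfl, ?_⟩
  intro g c' hg hsame
  have : T c' = T c := by
    ext j
    rw [key c' g hg j, key c f hf j, hsame j]
  have hc : c' = c := hTbij.injective this
  rw [hc] at hg
  exact hg.unique hf
end

section
/- Sampling theorem: If X = (x_n) is a determining sequence for K, then every f ∈ H_{K,X} can be reconstructed from its samples by f = Σ_{k∈ℕ} f(x_k) L_k, where L_k = Σ_{n∈ℕ} (A_{K,X}^{-1} e_k)_n K(·,x_n) ∈ H_{K,X} and e_k is the k-th unit vector of ℓ²(ℕ); the series converges in H_K. -/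
open scoped RealInnerProductSpace

/-- Sampling theorem: every f ∈ H_{K,X} is reconstructed from its samples
f(x_k) = ⟪f, K(·,x_k)⟫_K by f = Σ f(x_k) L_k, with
L_k = Σ_n (A_{K,X}⁻¹ e_k)_n K(·,x_n) ∈ H_{K,X}, the series converging in H_K. -/
theorem stmt_12 {d : ℕ}
    (K : EuclideanSpace ℝ (Fin d) → EuclideanSpace ℝ (Fin d) → ℝ)
    (hK : IsPDKernel K)
    {H : Type*} [NormedAddCommGroup H] [InnerProductSpace ℝ H] [CompleteSpace H]
    (k : EuclideanSpace ℝ (Fin d) → H)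
    (hk : ∀ x y, ⟪k x, k y⟫ = K x y)
    (hdense : (Submodule.span ℝ (Set.range k)).topologicalClosure = ⊤)
    (x : ℕ → EuclideanSpace ℝ (Fin d)) (hx : Function.Injective x)
    -- X is determining: the infinite kernel matrix A_{K,X} acts as a bounded
    -- bijective operator T on ℓ²(ℕ)
    (T : lp (fun _ : ℕ => ℝ) 2 →L[ℝ] lp (fun _ : ℕ => ℝ) 2)
    (hTbij : Function.Bijective T)
    (hT : ∀ (c : lp (fun _ : ℕ => ℝ) 2) (j : ℕ),
      HasSum (fun m => K (x j) (x m) * c m) (T c j))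
    -- a i = A_{K,X}⁻¹ e_i, and L i = Σ_n (a i)_n K(·,x_n)
    (a : ℕ → lp (fun _ : ℕ => ℝ) 2) (ha : ∀ i, T (a i) = lp.single 2 i 1)
    (L : ℕ → H) (hL : ∀ i, HasSum (fun m => a i m • k (x m)) (L i)) :
    (∀ i, L i ∈ (Submodule.span ℝ (Set.range fun n => k (x n))).topologicalClosure) ∧
    ∀ f ∈ (Submodule.span ℝ (Set.range fun n => k (x n))).topologicalClosure,
      HasSum (fun i => ⟪f, k (x i)⟫ • L i) f := by
  classical
  obtain ⟨-, hKsym, -⟩ := hK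
  set S := (Submodule.span ℝ (Set.range fun n => k (x n))).topologicalClosure with hSdef
  -- coordinates of T
  have hTcoord : ∀ (c : lp (fun _ : ℕ => ℝ) 2) (j : ℕ),
      T c j = ∑' m, K (x j) (x m) * c m := fun c j => (hT c j).tsum_eq.symm
  -- T on unit vectors
  have hTsingle : ∀ j m, T (lp.single 2 j 1) m = K (x m) (x j) := by
    intro j m
    refine (hT (lp.single 2 j 1) m).unique ?_
    convert hasSum_ite_eq j (K (x m) (x j)) using 1
    funext n
    by_cases h : n = j
    · subst h; simp [lp.single_apply_self]
    · simp [lp.single_apply_ne _ _ _ h, h]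
  -- component inner products on lp are multiplication
  have hinnerR : ∀ u v : ℝ, ⟪u, v⟫ = u * v := fun u v => by
    simp [RCLike.inner_apply, mul_comm]
  -- self-adjointness of T
  have hadjT : ContinuousLinearMap.adjoint T = T := by
    refine ContinuousLinearMap.ext fun c => ?_
    refine lp.ext (funext fun j => ?_)
    have h1 : ⟪ContinuousLinearMap.adjoint T c, lp.single 2 j 1⟫ = ⟪c, T (lp.single 2 j 1)⟫ :=
      ContinuousLinearMap.adjoint_inner_left T (lp.single 2 j 1) c
    rw [lp.inner_single_right, hinnerR, mul_one] at h1
    rw [h1, lp.inner_eq_tsum, hTcoord]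
    congr 1
    funext m
    rw [hinnerR, hTsingle, hKsym, mul_comm]
  have hTsa : ∀ u v : lp (fun _ : ℕ => ℝ) 2, ⟪T u, v⟫ = ⟪u, T v⟫ := by
    intro u v
    conv_lhs => rw [← hadjT]
    exact ContinuousLinearMap.adjoint_inner_left T v u
  -- key finite estimate
  have hkey : ∀ (c : ℕ → ℝ) (F : Finset ℕ),
      ‖∑ m ∈ F, c m • k (x m)‖ ^ 2 ≤ ‖T‖ * ∑ m ∈ F, c m ^ 2 := by
    intro c F
    set u : lp (fun _ : ℕ => ℝ) 2 := ∑ m ∈ F, lp.single 2 m (c m) with hu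
    have hu_apply : ∀ j, u j = if j ∈ F then c j else 0 := by
      intro j
      rw [hu]
      simp only [lp.coeFn_sum, Finset.sum_apply, lp.single_apply, Finset.sum_dite_eq,
        Pi.single_apply, Finset.sum_ite_eq]
    have hinner_u : ∀ v : lp (fun _ : ℕ => ℝ) 2, ⟪v, u⟫ = ∑ m ∈ F, v m * c m := by
      intro v
      rw [hu, inner_sum]
      exact Finset.sum_congr rfl fun m hm => by rw [lp.inner_single_right, hinnerR]
    have hTu : ∀ j, T u j = ∑ n ∈ F, K (x j) (x n) * c n := by
      intro j
      have hz : ∀ n ∉ F, K (x j) (x n) * u n = 0 := fun n hn => by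
        rw [hu_apply, if_neg hn, mul_zero]
      have h := (hT u j).unique (hasSum_sum_of_ne_finset_zero hz)
      rw [h]
      exact Finset.sum_congr rfl fun n hn => by rw [hu_apply, if_pos hn]
    have hnormu : ‖u‖ ^ 2 = ∑ m ∈ F, c m ^ 2 := by
      rw [← real_inner_self_eq_norm_sq, hinner_u]
      exact Finset.sum_congr rfl fun m hm => by rw [hu_apply, if_pos hm, sq]
    have hlhs : ‖∑ m ∈ F, c m • k (x m)‖ ^ 2 = ⟪T u, u⟫ := by
      rw [← real_inner_self_eq_norm_sq, sum_inner, hinner_u (T u)]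
      refine Finset.sum_congr rfl fun m hm => ?_
      rw [real_inner_smul_left, inner_sum, hTu, Finset.mul_sum, Finset.sum_mul]
      refine Finset.sum_congr rfl fun n hn => ?_
      rw [real_inner_smul_right, hk]
      ring
    calc ‖∑ m ∈ F, c m • k (x m)‖ ^ 2 = ⟪T u, u⟫ := hlhs
      _ ≤ ‖T u‖ * ‖u‖ := real_inner_le_norm _ _
      _ ≤ (‖T‖ * ‖u‖) * ‖u‖ := mul_le_mul_of_nonneg_right (T.le_opNorm u) (norm_nonneg u)
      _ = ‖T‖ * ‖u‖ ^ 2 := by ring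
      _ = ‖T‖ * ∑ m ∈ F, c m ^ 2 := by rw [hnormu]
  -- square-summability of coordinates
  have hsq : ∀ c : lp (fun _ : ℕ => ℝ) 2, Summable (fun m => (c m : ℝ) ^ 2) := by
    intro c
    have h := (lp.memℓp c).summable (by norm_num : 0 < (2 : ENNReal).toReal)
    have h2 : ((2 : ENNReal)).toReal = ((2 : ℕ) : ℝ) := by simp
    refine h.congr fun m => ?_
    rw [h2, Real.rpow_natCast]
    simp [sq_abs]
  have hnorm_c : ∀ c : lp (fun _ : ℕ => ℝ) 2, ‖c‖ ^ 2 = ∑' m, (c m : ℝ) ^ 2 := by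
    intro c
    rw [← real_inner_self_eq_norm_sq, lp.inner_eq_tsum]
    congr 1
    funext m
    rw [hinnerR, sq]
  -- summability of the synthesis series
  have hsummable : ∀ c : lp (fun _ : ℕ => ℝ) 2, Summable (fun m => (c m : ℝ) • k (x m)) := by
    intro c
    rw [summable_iff_vanishing_norm]
    intro ε hε
    obtain ⟨s, hs⟩ := summable_iff_vanishing_norm.mp (hsq c) (ε ^ 2 / (‖T‖ + 1))
      (by positivity)
    refine ⟨s, fun t ht => ?_⟩
    have h1 := hkey (fun m => c m) t
    have h2 := hs t ht
    have h3 : (0 : ℝ) ≤ ∑ m ∈ t, (c m : ℝ) ^ 2 := Finset.sum_nonneg fun _ _ => sq_nonneg _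
    rw [Real.norm_eq_abs, abs_of_nonneg h3] at h2
    have hT0 : (0 : ℝ) ≤ ‖T‖ := norm_nonneg _
    have hbound : ‖∑ m ∈ t, (c m : ℝ) • k (x m)‖ ^ 2 < ε ^ 2 := by
      have h5 : ‖T‖ * ∑ m ∈ t, (c m : ℝ) ^ 2 < (‖T‖ + 1) * (ε ^ 2 / (‖T‖ + 1)) := by
        nlinarith
      have h6 : (‖T‖ + 1) * (ε ^ 2 / (‖T‖ + 1)) = ε ^ 2 := by
        rw [mul_comm, div_mul_cancel₀ _ (by positivity : (‖T‖ + 1 : ℝ) ≠ 0)]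
      nlinarith
    exact lt_of_pow_lt_pow_left₀ 2 hε.le hbound
  -- the synthesis operator V
  let Vlin : lp (fun _ : ℕ => ℝ) 2 →ₗ[ℝ] H :=
    { toFun := fun c => ∑' m, (c m : ℝ) • k (x m)
      map_add' := fun c d => by
        simp only [lp.coeFn_add, Pi.add_apply, add_smul]
        exact Summable.tsum_add (hsummable c) (hsummable d)
      map_smul' := fun r c => by
        simp only [lp.coeFn_smul, Pi.smul_apply, smul_eq_mul, RingHom.id_apply, mul_smul]
        exact Summable.tsum_const_smul r (hsummable c) }
  have hVlin_bound : ∀ c, ‖Vlin c‖ ≤ Real.sqrt ‖T‖ * ‖c‖ := by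
    intro c
    have hVsum : HasSum (fun m => (c m : ℝ) • k (x m)) (Vlin c) := (hsummable c).hasSum
    have ht0 : Filter.Tendsto (fun F : Finset ℕ => ∑ m ∈ F, (c m : ℝ) • k (x m))
        Filter.atTop (nhds (Vlin c)) := hVsum
    have ht : Filter.Tendsto (fun F : Finset ℕ => ‖∑ m ∈ F, (c m : ℝ) • k (x m)‖ ^ 2)
        Filter.atTop (nhds (‖Vlin c‖ ^ 2)) := ht0.norm.pow 2
    have hle : ‖Vlin c‖ ^ 2 ≤ ‖T‖ * ‖c‖ ^ 2 := by
      refine le_of_tendsto ht (Filter.Eventually.of_forall fun F => ?_)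
      refine (hkey (fun m => c m) F).trans ?_
      refine mul_le_mul_of_nonneg_left ?_ (norm_nonneg _)
      rw [hnorm_c]
      exact Summable.sum_le_tsum F (fun m _ => sq_nonneg _) (hsq c)
    have h := Real.sqrt_le_sqrt hle
    rwa [Real.sqrt_sq (norm_nonneg _), Real.sqrt_mul (norm_nonneg _),
      Real.sqrt_sq (norm_nonneg _)] at h
  let V : lp (fun _ : ℕ => ℝ) 2 →L[ℝ] H := Vlin.mkContinuous (Real.sqrt ‖T‖) hVlin_bound
  have hVapply : ∀ c : lp (fun _ : ℕ => ℝ) 2,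
      HasSum (fun m => (c m : ℝ) • k (x m)) (V c) := fun c => (hsummable c).hasSum
  -- V on unit vectors
  have hVsingle : ∀ i, V (lp.single 2 i 1) = k (x i) := by
    intro i
    refine (hVapply (lp.single 2 i 1)).unique ?_
    convert hasSum_ite_eq i (k (x i)) using 1
    funext m
    by_cases h : m = i
    · subst h; simp [lp.single_apply_self]
    · simp [lp.single_apply_ne _ _ _ h, h]
  -- the Gram identity ⟪V c, V d⟫ = ⟪T c, d⟫
  have hVV : ∀ c d : lp (fun _ : ℕ => ℝ) 2, ⟪V c, V d⟫ = ⟪T c, d⟫ := by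
    intro c d
    have h1 : ∀ m, T d m = ⟪k (x m), V d⟫ := by
      intro m
      have h := (hVapply d).mapL (innerSL ℝ (k (x m)))
      have he : (fun n => (innerSL ℝ (k (x m))) ((d n : ℝ) • k (x n)))
          = fun n => K (x m) (x n) * (d n : ℝ) := by
        funext n
        rw [innerSL_apply_apply, real_inner_smul_right, hk, mul_comm]
      rw [he] at h
      exact (hT d m).unique h
    have h2 : HasSum (fun m => (c m : ℝ) * T d m) ⟪V c, V d⟫ := by
      have h := (hVapply c).mapL (innerSL ℝ (V d))
      have he : (fun m => (innerSL ℝ (V d)) ((c m : ℝ) • k (x m)))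
          = fun m => (c m : ℝ) * T d m := by
        funext m
        rw [innerSL_apply_apply, real_inner_smul_right, real_inner_comm, ← h1]
      rw [he] at h
      have hpt : (innerSL ℝ (V d)) (V c) = ⟪V c, V d⟫ := real_inner_comm _ _
      rwa [hpt] at h
    have h3 : HasSum (fun m => (c m : ℝ) * T d m) ⟪c, T d⟫ := by
      have h := lp.hasSum_inner (𝕜 := ℝ) c (T d)
      simpa [hinnerR, mul_comm] using h
    calc ⟪V c, V d⟫ = ⟪c, T d⟫ := h2.unique h3
      _ = ⟪T c, d⟫ := (hTsa c d).symm
  -- T as a continuous linear equivalence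
  let Te : lp (fun _ : ℕ => ℝ) 2 ≃L[ℝ] lp (fun _ : ℕ => ℝ) 2 :=
    ContinuousLinearEquiv.ofBijective T (LinearMap.ker_eq_bot.mpr hTbij.1)
      (LinearMap.range_eq_top.mpr hTbij.2)
  have hTe_apply : ∀ c, Te c = T c := fun c => rfl
  have hai : ∀ i, a i = Te.symm (lp.single 2 i 1) := by
    intro i
    have h : Te (a i) = lp.single 2 i 1 := by rw [hTe_apply]; exact ha i
    rw [← h, ContinuousLinearEquiv.symm_apply_apply]
  have hVa : ∀ i, V (a i) = L i := fun i => (hVapply (a i)).unique (hL i)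
  -- coordinates of the adjoint of V
  have hadjV : ∀ (f : H) (i : ℕ), (ContinuousLinearMap.adjoint V f) i = ⟪f, k (x i)⟫ := by
    intro f i
    have h1 : ⟪ContinuousLinearMap.adjoint V f, lp.single 2 i 1⟫ = ⟪f, V (lp.single 2 i 1)⟫ :=
      ContinuousLinearMap.adjoint_inner_left V (lp.single 2 i 1) f
    rw [lp.inner_single_right, hinnerR, mul_one, hVsingle] at h1
    exact h1
  -- V† ∘ V = T
  have hVtV : ∀ c, ContinuousLinearMap.adjoint V (V c) = T c := by
    intro c
    refine lp.ext (funext fun i => ?_)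
    have h := hVV c (lp.single 2 i 1)
    rw [hVsingle, lp.inner_single_right, hinnerR, mul_one] at h
    rw [hadjV, h]
  -- every V c lies in S
  have hmemS : ∀ c, V c ∈ S := by
    intro c
    have hclosed : IsClosed (S : Set H) := Submodule.isClosed_topologicalClosure _
    have ht0 : Filter.Tendsto (fun F : Finset ℕ => ∑ m ∈ F, (c m : ℝ) • k (x m))
        Filter.atTop (nhds (V c)) := hVapply c
    refine hclosed.mem_of_tendsto ht0 (Filter.Eventually.of_forall fun F => ?_)
    refine Submodule.le_topologicalClosure _ ?_
    refine Submodule.sum_mem _ fun m _ => Submodule.smul_mem _ _ ?_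
    exact Submodule.subset_span ⟨m, rfl⟩
  -- the reconstruction operator
  let P : H →L[ℝ] H := V ∘L ((Te.symm : lp (fun _ : ℕ => ℝ) 2 →L[ℝ] lp (fun _ : ℕ => ℝ) 2)
    ∘L ContinuousLinearMap.adjoint V)
  have hPdef : ∀ f, P f = V (Te.symm (ContinuousLinearMap.adjoint V f)) := fun f => rfl
  have hPf : ∀ f : H, HasSum (fun i => ⟪f, k (x i)⟫ • L i) (P f) := by
    intro f
    have h := lp.hasSum_single (E := fun _ : ℕ => ℝ) ENNReal.ofNat_ne_top
      (ContinuousLinearMap.adjoint V f)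
    have h2 := h.mapL (V ∘L (Te.symm : lp (fun _ : ℕ => ℝ) 2 →L[ℝ] lp (fun _ : ℕ => ℝ) 2))
    have he : (fun i => (V ∘L (Te.symm : lp (fun _ : ℕ => ℝ) 2 →L[ℝ] lp (fun _ : ℕ => ℝ) 2))
        (lp.single 2 i ((ContinuousLinearMap.adjoint V f) i : ℝ)))
        = fun i => ⟪f, k (x i)⟫ • L i := by
      funext i
      have hs : lp.single 2 i ((ContinuousLinearMap.adjoint V f) i : ℝ)
          = ((ContinuousLinearMap.adjoint V f) i : ℝ) •
            (lp.single 2 i (1 : ℝ) : lp (fun _ : ℕ => ℝ) 2) := by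
        rw [← lp.single_smul, smul_eq_mul, mul_one]
      rw [ContinuousLinearMap.comp_apply, hs, map_smul, ContinuousLinearEquiv.coe_coe,
        ← hai, map_smul, hVa, hadjV]
    rw [he] at h2
    exact h2
  have hPk : ∀ n, P (k (x n)) = k (x n) := by
    intro n
    rw [hPdef, ← hVsingle n, hVtV]
    have h : Te.symm (T (lp.single 2 n 1)) = lp.single 2 n 1 := by
      rw [← hTe_apply, ContinuousLinearEquiv.symm_apply_apply]
    rw [h]
  have hPS : ∀ f ∈ S, P f = f := by
    intro f hf
    have hker : S ≤ LinearMap.ker (P - ContinuousLinearMap.id ℝ H).toLinearMap := by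
      refine Submodule.topologicalClosure_minimal _ ?_ ?_
      · rw [Submodule.span_le]
        rintro _ ⟨n, rfl⟩
        simp only [SetLike.mem_coe, LinearMap.mem_ker, ContinuousLinearMap.coe_coe, ContinuousLinearMap.coe_sub',
          Pi.sub_apply, ContinuousLinearMap.coe_id', id_eq]
        rw [hPk n, sub_self]
      · exact ContinuousLinearMap.isClosed_ker _
    have h := hker hf
    rw [LinearMap.mem_ker] at h
    have h2 : P f - f = 0 := by
      simpa [ContinuousLinearMap.sub_apply] using h
    exact sub_eq_zero.mp h2
  exact ⟨fun i => by rw [← hVa i]; exact hmemS (a i),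
    fun f hf => by have h := hPf f; rwa [hPS f hf] at h⟩
end

section
/- If X is a determining sequence for K, then (K(·,x_j))_{j∈ℕ} and (L_k)_{k∈ℕ} are dual Riesz bases of H_{K,X}; in particular every f ∈ H_{K,X} satisfies f = Σ_k ⟨f, L_k⟩_K K(·,x_k) = Σ_k ⟨f, K(·,x_k)⟩_K L_k, and the Gram matrix of (L_k) equals A_{K,X}^{-1}. -/
open scoped RealInnerProductSpace ENNReal

lemma coord_sum_single (c : ℕ → ℝ) (s : Finset ℕ) (m : ℕ) :
    (∑ n ∈ s, c n • lp.single 2 n (1:ℝ) : lp (fun _ : ℕ => ℝ) 2) m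
      = if m ∈ s then c m else 0 := by
  classical
  rw [lp.coeFn_sum]
  simp only [Finset.sum_apply, lp.coeFn_smul, Pi.smul_apply, lp.single_apply, smul_eq_mul]
  simp [Finset.sum_ite_eq' s m, eq_comm, Pi.single_apply]

lemma norm_sq_sum_single (c : ℕ → ℝ) (s : Finset ℕ) :
    ‖(∑ n ∈ s, c n • lp.single 2 n (1:ℝ) : lp (fun _ : ℕ => ℝ) 2)‖ ^ 2
      = ∑ n ∈ s, c n ^ 2 := by
  classical
  rw [← real_inner_self_eq_norm_sq]
  refine (lp.hasSum_inner _ _).unique ?_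
  have h : ∀ m ∉ s, (∑ n ∈ s, c n • lp.single 2 n (1:ℝ) : lp (fun _ : ℕ => ℝ) 2) m *
      (∑ n ∈ s, c n • lp.single 2 n (1:ℝ) : lp (fun _ : ℕ => ℝ) 2) m = 0 := by
    intro m hm; rw [coord_sum_single, if_neg hm, zero_mul]
  have h2 := hasSum_sum_of_ne_finset_zero (L := SummationFilter.unconditional ℕ) h
  have e : ∀ m ∈ s, (∑ n ∈ s, c n • lp.single 2 n (1:ℝ) : lp (fun _ : ℕ => ℝ) 2) m *
      (∑ n ∈ s, c n • lp.single 2 n (1:ℝ) : lp (fun _ : ℕ => ℝ) 2) m = c m ^ 2 := by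
    intro m hm; rw [coord_sum_single, if_pos hm, sq]
  rwa [Finset.sum_congr rfl e] at h2

set_option maxHeartbeats 1000000 in
/-- (K(·,x_j)) and (L_k) are dual Riesz bases of H_{K,X}: both are Riesz bases,
they are biorthogonal, every f ∈ H_{K,X} has the two expansions
f = Σ ⟪f,L_k⟫ K(·,x_k) = Σ ⟪f,K(·,x_k)⟫ L_k, and the Gram matrix of (L_k)
is A_{K,X}⁻¹, i.e. ⟪L_j, L_i⟫ = (A_{K,X}⁻¹ e_i)_j. -/
theorem stmt_14 {d : ℕ}
    (K : EuclideanSpace ℝ (Fin d) → EuclideanSpace ℝ (Fin d) → ℝ)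
    (hK : IsPDKernel K)
    {H : Type*} [NormedAddCommGroup H] [InnerProductSpace ℝ H] [CompleteSpace H]
    (k : EuclideanSpace ℝ (Fin d) → H)
    (hk : ∀ x y, ⟪k x, k y⟫ = K x y)
    (hdense : (Submodule.span ℝ (Set.range k)).topologicalClosure = ⊤)
    (x : ℕ → EuclideanSpace ℝ (Fin d)) (hx : Function.Injective x)
    -- X is determining: the infinite kernel matrix A_{K,X} acts as a bounded
    -- bijective operator T on ℓ²(ℕ)
    (T : lp (fun _ : ℕ => ℝ) 2 →L[ℝ] lp (fun _ : ℕ => ℝ) 2)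
    (hTbij : Function.Bijective T)
    (hT : ∀ (c : lp (fun _ : ℕ => ℝ) 2) (j : ℕ),
      HasSum (fun m => K (x j) (x m) * c m) (T c j))
    (a : ℕ → lp (fun _ : ℕ => ℝ) 2) (ha : ∀ i, T (a i) = lp.single 2 i 1)
    (L : ℕ → H) (hL : ∀ i, HasSum (fun m => a i m • k (x m)) (L i)) :
    IsRieszBasisOf ((Submodule.span ℝ (Set.range fun n => k (x n))).topologicalClosure)
      (fun n => k (x n)) ∧
    IsRieszBasisOf ((Submodule.span ℝ (Set.range fun n => k (x n))).topologicalClosure) L ∧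
    (∀ j i, ⟪k (x j), L i⟫ = if j = i then 1 else 0) ∧
    (∀ f ∈ (Submodule.span ℝ (Set.range fun n => k (x n))).topologicalClosure,
      HasSum (fun i => ⟪f, L i⟫ • k (x i)) f ∧ HasSum (fun i => ⟪f, k (x i)⟫ • L i) f) ∧
    (∀ j i, ⟪L j, L i⟫ = a i j) := by
  classical
  set S : Submodule ℝ H :=
    (Submodule.span ℝ (Set.range fun n => k (x n))).topologicalClosure with hSdef
  have hSclosed : IsClosed (S : Set H) := Submodule.isClosed_topologicalClosure _
  have hmemS : ∀ n, k (x n) ∈ S :=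
    fun n => Submodule.le_topologicalClosure _ (Submodule.subset_span ⟨n, rfl⟩)
  haveI : CompleteSpace S := hSclosed.completeSpace_coe
  -- T as a continuous linear equivalence
  let Te : lp (fun _ : ℕ => ℝ) 2 ≃L[ℝ] lp (fun _ : ℕ => ℝ) 2 :=
    ContinuousLinearEquiv.ofBijective T (LinearMap.ker_eq_bot.mpr hTbij.1)
      (LinearMap.range_eq_top.mpr hTbij.2)
  have hTe : ∀ c, Te c = T c := fun c => rfl
  -- finite Gram bound
  have hfin : ∀ (c : ℕ → ℝ) (s : Finset ℕ),
      ‖∑ n ∈ s, c n • k (x n)‖ ^ 2 ≤ ‖T‖ * ∑ n ∈ s, c n ^ 2 := by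
    intro c s
    set u : lp (fun _ : ℕ => ℝ) 2 := ∑ n ∈ s, c n • lp.single 2 n (1:ℝ) with hu
    have hucoord : ∀ m, u m = if m ∈ s then c m else 0 := coord_sum_single c s
    have hTu' : ∀ j, T u j = ∑ m ∈ s, K (x j) (x m) * c m := by
      intro j
      refine (hT u j).unique ?_
      have h0 : ∀ m ∉ s, K (x j) (x m) * u m = 0 := fun m hm => by
        rw [hucoord, if_neg hm, mul_zero]
      have h2 := hasSum_sum_of_ne_finset_zero (L := SummationFilter.unconditional ℕ) h0
      have e : ∀ m ∈ s, K (x j) (x m) * u m = K (x j) (x m) * c m := fun m hm => by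
        rw [hucoord, if_pos hm]
      rwa [Finset.sum_congr rfl e] at h2
    have hnorm : ‖∑ n ∈ s, c n • k (x n)‖ ^ 2 = ⟪T u, u⟫ := by
      rw [← real_inner_self_eq_norm_sq, sum_inner]
      have hrhs : HasSum (fun j => T u j * u j) ⟪T u, u⟫ := by
        simpa only [Real.inner_apply] using lp.hasSum_inner (𝕜 := ℝ) (T u) u
      have h0 : ∀ j ∉ s, T u j * u j = 0 := fun j hj => by
        rw [hucoord, if_neg hj, mul_zero]
      have h2 := (hasSum_sum_of_ne_finset_zero (L := SummationFilter.unconditional ℕ) h0).unique hrhs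
      rw [← h2]
      refine Finset.sum_congr rfl fun j hj => ?_
      rw [hucoord, if_pos hj, hTu' j, real_inner_smul_left, inner_sum,
        Finset.sum_mul, Finset.mul_sum]
      refine Finset.sum_congr rfl fun m hm => ?_
      rw [real_inner_smul_right, hk]
      ring
    have hb : ⟪T u, u⟫ ≤ ‖T‖ * ‖u‖ ^ 2 := by
      calc ⟪T u, u⟫ ≤ ‖T u‖ * ‖u‖ := real_inner_le_norm _ _
        _ ≤ (‖T‖ * ‖u‖) * ‖u‖ :=
            mul_le_mul_of_nonneg_right (T.le_opNorm u) (norm_nonneg u)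
        _ = ‖T‖ * ‖u‖ ^ 2 := by ring
    rw [hnorm]
    calc ⟪T u, u⟫ ≤ ‖T‖ * ‖u‖ ^ 2 := hb
      _ = ‖T‖ * ∑ n ∈ s, c n ^ 2 := by rw [hu, norm_sq_sum_single]
  -- square-summability of coefficients
  have hc2 : ∀ c : lp (fun _ : ℕ => ℝ) 2, Summable (fun n => c n ^ 2) := by
    intro c
    have h := (lp.memℓp c).summable (p := 2) (by norm_num)
    refine h.congr fun n => ?_
    have h2 : ((2:ℝ≥0∞)).toReal = (2:ℝ) := by norm_num
    rw [h2, Real.rpow_two, Real.norm_eq_abs, sq_abs]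
  -- summability of the synthesis series
  have hVsummable : ∀ c : lp (fun _ : ℕ => ℝ) 2, Summable (fun n => c n • k (x n)) := by
    intro c
    rw [summable_iff_vanishing_norm]
    intro ε hε
    have hδ : 0 < ε ^ 2 / (‖T‖ + 1) := div_pos (pow_pos hε 2) (by linarith [norm_nonneg T])
    obtain ⟨s, hs⟩ := summable_iff_vanishing_norm.1 (hc2 c) _ hδ
    refine ⟨s, fun t ht => ?_⟩
    have h2 : ∑ n ∈ t, c n ^ 2 < ε ^ 2 / (‖T‖ + 1) := by
      have := hs t ht
      rwa [Real.norm_eq_abs,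
        abs_of_nonneg (Finset.sum_nonneg fun n _ => sq_nonneg _)] at this
    have h3 : ‖∑ n ∈ t, c n • k (x n)‖ ^ 2 < ε ^ 2 := by
      have hsum0 : (0:ℝ) ≤ ∑ n ∈ t, c n ^ 2 := Finset.sum_nonneg fun n _ => sq_nonneg _
      calc ‖∑ n ∈ t, c n • k (x n)‖ ^ 2 ≤ ‖T‖ * ∑ n ∈ t, c n ^ 2 := hfin _ t
        _ ≤ (‖T‖ + 1) * ∑ n ∈ t, c n ^ 2 :=
            mul_le_mul_of_nonneg_right (by linarith) hsum0
        _ < (‖T‖ + 1) * (ε ^ 2 / (‖T‖ + 1)) :=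
            mul_lt_mul_of_pos_left h2 (by linarith [norm_nonneg T])
        _ = ε ^ 2 := by
            rw [mul_comm]
            exact div_mul_cancel₀ _ (ne_of_gt (by linarith [norm_nonneg T]))
    exact lt_of_pow_lt_pow_left₀ 2 hε.le h3
  have hVhas0 : ∀ c : lp (fun _ : ℕ => ℝ) 2,
      HasSum (fun n => c n • k (x n)) (∑' n, c n • k (x n)) :=
    fun c => (hVsummable c).hasSum
  -- norm bound for the synthesis operator
  have hVnormsq : ∀ c : lp (fun _ : ℕ => ℝ) 2,
      ‖∑' n, c n • k (x n)‖ ^ 2 ≤ ‖T‖ * ‖c‖ ^ 2 := by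
    intro c
    have hcs : ∀ s : Finset ℕ, ∑ n ∈ s, c n ^ 2 ≤ ‖c‖ ^ 2 := by
      intro s
      have h1 : HasSum (fun i => c i * c i) ⟪c, c⟫ := lp.hasSum_inner c c
      have h2 := sum_le_hasSum s (fun n _ => mul_self_nonneg (c n)) h1
      rw [real_inner_self_eq_norm_sq] at h2
      calc ∑ n ∈ s, c n ^ 2 = ∑ n ∈ s, c n * c n := by
            refine Finset.sum_congr rfl fun n _ => sq (c n) ▸ by ring
        _ ≤ ‖c‖ ^ 2 := h2
    have hlim : Filter.Tendsto (fun s : Finset ℕ => ‖∑ n ∈ s, c n • k (x n)‖ ^ 2)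
        Filter.atTop (nhds (‖∑' n, c n • k (x n)‖ ^ 2)) :=
      ((continuous_norm.pow 2).tendsto _).comp (hVhas0 c)
    refine le_of_tendsto hlim (Filter.Eventually.of_forall fun s => ?_)
    calc ‖∑ n ∈ s, c n • k (x n)‖ ^ 2 ≤ ‖T‖ * ∑ n ∈ s, c n ^ 2 := hfin _ s
      _ ≤ ‖T‖ * ‖c‖ ^ 2 := mul_le_mul_of_nonneg_left (hcs s) (norm_nonneg _)
  -- the synthesis operator V
  let Vlin : lp (fun _ : ℕ => ℝ) 2 →ₗ[ℝ] H :=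
    { toFun := fun c => ∑' n, c n • k (x n)
      map_add' := by
        intro c d
        have hsum := (hVhas0 c).add (hVhas0 d)
        have e : (fun n => c n • k (x n) + d n • k (x n))
            = fun n => (c + d) n • k (x n) := by
          funext n; rw [lp.coeFn_add, Pi.add_apply, add_smul]
        rw [e] at hsum
        exact hsum.tsum_eq
      map_smul' := by
        intro r c
        have hsum := (hVhas0 c).const_smul r
        have e : (fun n => r • (c n • k (x n))) = fun n => (r • c) n • k (x n) := by
          funext n; rw [lp.coeFn_smul, Pi.smul_apply, smul_smul, smul_eq_mul]
        rw [e] at hsum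
        exact hsum.tsum_eq }
  have hVbound : ∀ c, ‖Vlin c‖ ≤ Real.sqrt ‖T‖ * ‖c‖ := by
    intro c
    have h2 : ‖Vlin c‖ ≤ Real.sqrt (‖T‖ * ‖c‖ ^ 2) := by
      rw [← Real.sqrt_sq (norm_nonneg (Vlin c))]
      exact Real.sqrt_le_sqrt (hVnormsq c)
    calc ‖Vlin c‖ ≤ Real.sqrt (‖T‖ * ‖c‖ ^ 2) := h2
      _ = Real.sqrt ‖T‖ * ‖c‖ := by
          rw [Real.sqrt_mul (norm_nonneg T), Real.sqrt_sq (norm_nonneg c)]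
  let Vc : lp (fun _ : ℕ => ℝ) 2 →L[ℝ] H := Vlin.mkContinuous (Real.sqrt ‖T‖) hVbound
  have hVhas : ∀ c : lp (fun _ : ℕ => ℝ) 2, HasSum (fun n => c n • k (x n)) (Vc c) :=
    fun c => hVhas0 c
  have hVb : ∀ c, ‖Vc c‖ ≤ Real.sqrt ‖T‖ * ‖c‖ := hVbound
  have hVsingle : ∀ n, Vc (lp.single 2 n (1:ℝ)) = k (x n) := by
    intro n
    have h0 : ∀ m, m ≠ n → (lp.single 2 n (1:ℝ) : lp (fun _ : ℕ => ℝ) 2) m • k (x m) = 0 :=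
      fun m hm => by rw [lp.single_apply_ne 2 n _ hm, zero_smul]
    have h' := hasSum_single (f := fun m =>
      (lp.single 2 n (1:ℝ) : lp (fun _ : ℕ => ℝ) 2) m • k (x m)) n h0
    have h2 := (hVhas _).unique h'
    simpa [lp.single_apply_self] using h2
  -- key inner-product identities
  have hVk : ∀ (c : lp (fun _ : ℕ => ℝ) 2) (m : ℕ), ⟪Vc c, k (x m)⟫ = T c m := by
    intro c m
    have h1 := (hVhas c).mapL (innerSL ℝ (k (x m)))
    have e : (fun n => (innerSL ℝ (k (x m))) (c n • k (x n)))
        = fun n => K (x m) (x n) * c n := by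
      funext n; rw [innerSL_apply_apply, real_inner_smul_right, hk, mul_comm]
    rw [e] at h1
    rw [real_inner_comm]
    exact h1.unique (hT c m)
  have hVinner : ∀ u v : lp (fun _ : ℕ => ℝ) 2, ⟪Vc u, Vc v⟫ = ⟪T u, v⟫ := by
    intro u v
    have h1 := (hVhas v).mapL (innerSL ℝ (Vc u))
    have e : (fun m => (innerSL ℝ (Vc u)) (v m • k (x m))) = fun m => T u m * v m := by
      funext m
      rw [innerSL_apply_apply, real_inner_smul_right, hVk u m]
      ring
    rw [e] at h1
    exact h1.unique (by simpa only [Real.inner_apply] using lp.hasSum_inner (𝕜 := ℝ) (T u) v)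
  -- lower bound
  have hVlow : ∀ c : lp (fun _ : ℕ => ℝ) 2,
      ‖c‖ ≤ (‖(Te.symm : lp (fun _ : ℕ => ℝ) 2 →L[ℝ] lp (fun _ : ℕ => ℝ) 2)‖ *
        Real.sqrt ‖T‖) * ‖Vc c‖ := by
    intro c
    have h1 : ‖T c‖ ^ 2 = ⟪Vc c, Vc (T c)⟫ := by
      rw [hVinner, real_inner_self_eq_norm_sq]
    have h2 : ‖T c‖ ^ 2 ≤ ‖Vc c‖ * (Real.sqrt ‖T‖ * ‖T c‖) := by
      rw [h1]
      calc ⟪Vc c, Vc (T c)⟫ ≤ ‖Vc c‖ * ‖Vc (T c)‖ := real_inner_le_norm _ _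
        _ ≤ ‖Vc c‖ * (Real.sqrt ‖T‖ * ‖T c‖) :=
            mul_le_mul_of_nonneg_left (hVb (T c)) (norm_nonneg _)
    have h3 : ‖T c‖ ≤ Real.sqrt ‖T‖ * ‖Vc c‖ := by
      rcases eq_or_lt_of_le (norm_nonneg (T c)) with h0 | h0
      · rw [← h0]; positivity
      · nlinarith [h2, h0]
    have h4 : ‖c‖ ≤ ‖(Te.symm : lp (fun _ : ℕ => ℝ) 2 →L[ℝ] lp (fun _ : ℕ => ℝ) 2)‖ * ‖T c‖ := by
      have hcc : c = Te.symm (T c) := by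
        rw [← hTe, ContinuousLinearEquiv.symm_apply_apply]
      calc ‖c‖ = ‖Te.symm (T c)‖ := by rw [← hcc]
        _ ≤ ‖(Te.symm : lp (fun _ : ℕ => ℝ) 2 →L[ℝ] lp (fun _ : ℕ => ℝ) 2)‖ * ‖T c‖ :=
          (Te.symm : lp (fun _ : ℕ => ℝ) 2 →L[ℝ] lp (fun _ : ℕ => ℝ) 2).le_opNorm _
    calc ‖c‖ ≤ ‖(Te.symm : lp (fun _ : ℕ => ℝ) 2 →L[ℝ] lp (fun _ : ℕ => ℝ) 2)‖ * ‖T c‖ := h4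
      _ ≤ ‖(Te.symm : lp (fun _ : ℕ => ℝ) 2 →L[ℝ] lp (fun _ : ℕ => ℝ) 2)‖ *
          (Real.sqrt ‖T‖ * ‖Vc c‖) := mul_le_mul_of_nonneg_left h3 (norm_nonneg _)
      _ = _ := by ring
  set C : ℝ := ‖(Te.symm : lp (fun _ : ℕ => ℝ) 2 →L[ℝ] lp (fun _ : ℕ => ℝ) 2)‖ *
      Real.sqrt ‖T‖ with hC
  have hC0 : 0 ≤ C := by positivity
  have hanti : AntilipschitzWith C.toNNReal Vc := by
    refine Vc.antilipschitz_of_bound fun y => ?_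
    rw [Real.coe_toNNReal _ hC0]
    exact hVlow y
  have hVinj : Function.Injective Vc := hanti.injective
  have hclosedrange : IsClosed (Set.range Vc) := hanti.isClosed_range Vc.uniformContinuous
  have hrange : LinearMap.range (Vc : lp (fun _ : ℕ => ℝ) 2 →ₗ[ℝ] H) = S := by
    apply le_antisymm
    · rintro y ⟨c, rfl⟩
      refine hSclosed.mem_of_tendsto (hVhas c) (Filter.Eventually.of_forall fun s => ?_)
      exact Submodule.sum_mem _ fun n _ => Submodule.smul_mem _ _ (hmemS n)
    · have hle : Submodule.span ℝ (Set.range fun n => k (x n)) ≤ LinearMap.range (Vc : lp (fun _ : ℕ => ℝ) 2 →ₗ[ℝ] H) := by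
        rw [Submodule.span_le]
        rintro y ⟨n, rfl⟩
        exact ⟨lp.single 2 n 1, hVsingle n⟩
      refine Submodule.topologicalClosure_minimal _ hle ?_
      simpa [LinearMap.coe_range] using hclosedrange
  -- the Riesz-basis equivalences
  let VS : lp (fun _ : ℕ => ℝ) 2 →L[ℝ] S :=
    Vc.codRestrict S (fun c => by rw [← hrange]; exact LinearMap.mem_range_self _ c)
  have hkerVS : LinearMap.ker (VS : lp (fun _ : ℕ => ℝ) 2 →ₗ[ℝ] S) = ⊥ := by
    rw [ContinuousLinearMap.ker_codRestrict]
    exact LinearMap.ker_eq_bot.mpr hVinj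
  have hrangeVS : LinearMap.range (VS : lp (fun _ : ℕ => ℝ) 2 →ₗ[ℝ] S) = ⊤ := by
    rw [LinearMap.range_eq_top]
    intro y
    have : (y : H) ∈ LinearMap.range (Vc : lp (fun _ : ℕ => ℝ) 2 →ₗ[ℝ] H) := by rw [hrange]; exact y.2
    obtain ⟨c, hc⟩ := this
    exact ⟨c, Subtype.ext hc⟩
  let E1 : lp (fun _ : ℕ => ℝ) 2 ≃L[ℝ] S :=
    ContinuousLinearEquiv.ofBijective VS hkerVS hrangeVS
  have hE1 : ∀ c, (E1 c : H) = Vc c := fun c =>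
    congrArg Subtype.val (congrFun (ContinuousLinearEquiv.coeFn_ofBijective VS hkerVS hrangeVS) c)
  have haL : ∀ i, L i = Vc (a i) := fun i => (hL i).unique (hVhas (a i))
  have ha' : ∀ i, Te.symm (lp.single 2 i 1) = a i := fun i => by
    rw [← ha i, ← hTe, ContinuousLinearEquiv.symm_apply_apply]
  let E2 : lp (fun _ : ℕ => ℝ) 2 ≃L[ℝ] S := Te.symm.trans E1
  have hE2 : ∀ i, (E2 (lp.single 2 i 1) : H) = L i := by
    intro i
    have : E2 (lp.single 2 i 1) = E1 (Te.symm (lp.single 2 i 1)) := rfl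
    rw [this, ha' i, hE1, ← haL]
  have hmemL : ∀ i, L i ∈ S := fun i => by
    rw [haL i, ← hrange]; exact LinearMap.mem_range_self _ _
  -- biorthogonality
  have hbi : ∀ j i, ⟪k (x j), L i⟫ = if j = i then 1 else 0 := by
    intro j i
    have h1 := (hL i).mapL (innerSL ℝ (k (x j)))
    have e : (fun m => (innerSL ℝ (k (x j))) (a i m • k (x m)))
        = fun m => K (x j) (x m) * a i m := by
      funext m; rw [innerSL_apply_apply, real_inner_smul_right, hk, mul_comm]
    rw [e] at h1
    have h2 : ⟪k (x j), L i⟫ = T (a i) j := h1.unique (hT (a i) j)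
    rw [h2, ha i]
    by_cases h : j = i
    · subst h; rw [lp.single_apply_self, if_pos rfl]
    · rw [lp.single_apply_ne 2 i _ h, if_neg h]
  -- Gram matrix
  have hGram : ∀ j i, ⟪L j, L i⟫ = a i j := by
    intro j i
    have h1 := (hL i).mapL (innerSL ℝ (L j))
    have e : (fun m => (innerSL ℝ (L j)) (a i m • k (x m)))
        = fun m => if m = j then a i j else 0 := by
      funext m
      rw [innerSL_apply_apply, real_inner_smul_right, real_inner_comm, hbi]
      by_cases h : m = j <;> simp [h]
    rw [e] at h1
    exact h1.unique (hasSum_ite_eq j (a i j))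
  refine ⟨⟨fun n => hmemS n, E1, fun n => by rw [hE1, hVsingle]⟩,
    ⟨hmemL, E2, hE2⟩, hbi, ?_, hGram⟩
  -- the two expansions
  intro f hf
  have hfS : f ∈ LinearMap.range (Vc : lp (fun _ : ℕ => ℝ) 2 →ₗ[ℝ] H) := by rw [hrange]; exact hf
  obtain ⟨c, rfl⟩ := hfS
  have hfL : ∀ i, ⟪Vc c, L i⟫ = c i := by
    intro i
    rw [haL i, hVinner]
    have hsym : ⟪T c, a i⟫ = ⟪T (a i), c⟫ := by
      rw [← hVinner, ← hVinner (a i) c, real_inner_comm]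
    rw [hsym, ha i, lp.inner_single_left]
    simp
  constructor
  · have h1 := hVhas c
    have e : (fun n => c n • k (x n)) = fun n => ⟪Vc c, L n⟫ • k (x n) := by
      funext n; rw [hfL n]
    rwa [e] at h1
  · have hd : HasSum (fun i => lp.single 2 i (T c i)) (T c) :=
      lp.hasSum_single ENNReal.ofNat_ne_top (T c)
    have hd2 := hd.mapL (Te.symm : lp (fun _ : ℕ => ℝ) 2 →L[ℝ] lp (fun _ : ℕ => ℝ) 2)
    have e2 : (fun i => (Te.symm : lp (fun _ : ℕ => ℝ) 2 →L[ℝ] lp (fun _ : ℕ => ℝ) 2)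
        (lp.single 2 i (T c i))) = fun i => T c i • a i := by
      funext i
      have hs : lp.single (E := fun _ : ℕ => ℝ) 2 i (T c i)
          = T c i • lp.single (E := fun _ : ℕ => ℝ) 2 i (1:ℝ) := by
        rw [← lp.single_smul, smul_eq_mul, mul_one]
      rw [ContinuousLinearEquiv.coe_coe, hs, map_smul, ha']
    rw [e2] at hd2
    have hTc : (Te.symm : lp (fun _ : ℕ => ℝ) 2 →L[ℝ] lp (fun _ : ℕ => ℝ) 2) (T c) = c := by
      rw [ContinuousLinearEquiv.coe_coe, ← hTe, ContinuousLinearEquiv.symm_apply_apply]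
    rw [hTc] at hd2
    have hd3 := hd2.mapL Vc
    have e3 : (fun i => Vc (T c i • a i)) = fun i => ⟪Vc c, k (x i)⟫ • L i := by
      funext i; rw [map_smul, ← haL, hVk]
    rwa [e3] at hd3
end

section
/- Under the assumptions that X is determining for K_1 and Y is determining for K_2, the families (K_1(·,x_j)·K_2(·,y_k))_{(j,k)∈ℕ²} and (L_{1,j}·L_{2,k})_{(j,k)∈ℕ²} are dual Riesz bases of H_{K, X×Y}, where L_{1,j} and L_{2,k} are the dual (sampling) basis functions for X in H_{K_1,X} and for Y in H_{K_2,Y}, respectively, and K is the tensor product kernel. -/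
open scoped RealInnerProductSpace

/-- A family (v i) is a Riesz basis of the Hilbert space H if it is the image of the
canonical orthonormal basis of ℓ²(ι) under a bounded invertible operator. -/
def IsRieszBasis {ι H : Type*} [DecidableEq ι] [NormedAddCommGroup H]
    [InnerProductSpace ℝ H] (v : ι → H) : Prop :=
  ∃ T : (lp (fun _ : ι => ℝ) 2) ≃L[ℝ] H, ∀ i, T (lp.single 2 i 1) = v i

/-- (H, φ) realizes the Hilbert tensor product H₁ ⊗ H₂ : the bilinear map φ satisfies
⟪φ f₁ f₂, φ g₁ g₂⟫ = ⟪f₁,g₁⟫⟪f₂,g₂⟫ and its range spans a dense subspace. -/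
def IsHilbertTensorProduct {H1 H2 H : Type*}
    [NormedAddCommGroup H1] [InnerProductSpace ℝ H1]
    [NormedAddCommGroup H2] [InnerProductSpace ℝ H2]
    [NormedAddCommGroup H] [InnerProductSpace ℝ H]
    (φ : H1 →ₗ[ℝ] H2 →ₗ[ℝ] H) : Prop :=
  (∀ (f1 g1 : H1) (f2 g2 : H2), ⟪φ f1 f2, φ g1 g2⟫ = ⟪f1, g1⟫ * ⟪f2, g2⟫) ∧
  (Submodule.span ℝ (Set.range fun p : H1 × H2 => φ p.1 p.2)).topologicalClosure = ⊤

section Helpers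

variable {E : Type*} [NormedAddCommGroup E] [InnerProductSpace ℝ E]

lemma gram_expand {ι : Type*} (F : Finset ι) (t : ι → ℝ) (u : ι → E) :
    ‖∑ j ∈ F, t j • u j‖ ^ 2 = ∑ j ∈ F, ∑ j' ∈ F, (t j * t j') * ⟪u j, u j'⟫ := by
  rw [← real_inner_self_eq_norm_sq, sum_inner]
  refine Finset.sum_congr rfl fun j _ => ?_
  rw [inner_sum]
  refine Finset.sum_congr rfl fun j' _ => ?_
  rw [real_inner_smul_left, real_inner_smul_right]; ring

lemma pos_sym_cs (A : E →L[ℝ] E) (hsym : ∀ x y, ⟪A x, y⟫ = ⟪x, A y⟫)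
    (hpos : ∀ x, 0 ≤ ⟪x, A x⟫) (x y : E) :
    ⟪x, A y⟫ ^ 2 ≤ ⟪x, A x⟫ * ⟪y, A y⟫ := by
  have key : ∀ t : ℝ, 0 ≤ ⟪y, A y⟫ * (t * t) + (2 * ⟪x, A y⟫) * t + ⟪x, A x⟫ := by
    intro t
    have h0 := hpos (x + t • y)
    have e : ⟪x + t • y, A (x + t • y)⟫
        = ⟪y, A y⟫ * (t * t) + (2 * ⟪x, A y⟫) * t + ⟪x, A x⟫ := by
      have hyx : ⟪y, A x⟫ = ⟪x, A y⟫ := by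
        rw [← hsym x y, real_inner_comm]
      rw [map_add, map_smul, inner_add_left, inner_add_right, inner_add_right,
        real_inner_smul_left, real_inner_smul_left, real_inner_smul_right,
        real_inner_smul_right, hyx]
      ring
    rw [e] at h0; exact h0
  have hd := discrim_le_zero key
  rw [discrim] at hd
  nlinarith [hd]

lemma pos_inv_lower [CompleteSpace E] (A : E →L[ℝ] E) (hbij : Function.Bijective A)
    (hsym : ∀ x y, ⟪A x, y⟫ = ⟪x, A y⟫) (hpos : ∀ x, 0 ≤ ⟪x, A x⟫) :
    ∃ α : ℝ, 0 < α ∧ ∀ x, α * ‖x‖ ^ 2 ≤ ⟪x, A x⟫ := by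
  let e := ContinuousLinearEquiv.ofBijective A
    (LinearMap.ker_eq_bot.mpr hbij.1) (LinearMap.range_eq_top.mpr hbij.2)
  have hecoe : (e : E → E) = A :=
    ContinuousLinearEquiv.coeFn_ofBijective A _ _
  set B : E →L[ℝ] E := (e.symm : E →L[ℝ] E) with hB
  have hAB : ∀ x, A (B x) = x := by
    intro x
    have := e.apply_symm_apply x
    rw [show e (e.symm x) = A (B x) from congrFun hecoe _] at this
    exact this
  by_cases hB0 : ‖B‖ = 0
  · refine ⟨1, one_pos, fun x => ?_⟩
    have hBz : B = 0 := by rwa [norm_eq_zero] at hB0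
    have hx : x = 0 := by
      have := hAB x
      rw [hBz] at this
      simpa using this.symm
    simp [hx]
  · have hBpos : 0 < ‖B‖ := lt_of_le_of_ne (norm_nonneg _) (Ne.symm hB0)
    refine ⟨‖B‖⁻¹, by positivity, fun x => ?_⟩
    by_cases hx : x = 0
    · simp [hx]
    have hcs := pos_sym_cs A hsym hpos x (B x)
    rw [hAB x, real_inner_self_eq_norm_sq] at hcs
    have h1 : ⟪B x, x⟫ ≤ ‖B‖ * ‖x‖ ^ 2 := by
      calc ⟪B x, x⟫ ≤ ‖B x‖ * ‖x‖ := real_inner_le_norm _ _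
        _ ≤ (‖B‖ * ‖x‖) * ‖x‖ := by
            have := B.le_opNorm x
            nlinarith [norm_nonneg x]
        _ = ‖B‖ * ‖x‖ ^ 2 := by ring
    have hxpos : 0 < ‖x‖ := norm_pos_iff.mpr hx
    have hx2 : 0 < ‖x‖ ^ 2 := by positivity
    have hAx := hpos x
    have h2 : (‖x‖ ^ 2) ^ 2 ≤ ⟪x, A x⟫ * (‖B‖ * ‖x‖ ^ 2) := by nlinarith [hcs, h1, hAx, hx2]
    have h3 : ‖x‖ ^ 2 ≤ ‖B‖ * ⟪x, A x⟫ := by nlinarith [h2, hx2, mul_pos hx2 hx2]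
    rw [inv_mul_le_iff₀ hBpos]
    linarith [h3]

end Helpers

section L2Helpers

variable {ι : Type*}

lemma lp_single_coord [DecidableEq ι] (i : ι) (x : ℝ) (j : ι) :
    (lp.single 2 i x : lp (fun _ : ι => ℝ) 2) j = if j = i then x else 0 := by
  rw [lp.single_apply]
  split_ifs with h
  · subst h; simp
  · simp [h]

noncomputable def finlp [DecidableEq ι] (F : Finset ι) (t : ι → ℝ) :
    lp (fun _ : ι => ℝ) 2 := ∑ j ∈ F, lp.single 2 j (t j)

lemma finlp_coord [DecidableEq ι] (F : Finset ι) (t : ι → ℝ) (i : ι) :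
    (finlp F t) i = if i ∈ F then t i else 0 := by
  rw [finlp]
  rw [show ((∑ j ∈ F, lp.single 2 j (t j) : lp (fun _ : ι => ℝ) 2) : ∀ _, ℝ) i
      = ∑ j ∈ F, (lp.single 2 j (t j) : lp (fun _ : ι => ℝ) 2) i by
    rw [lp.coeFn_sum, Finset.sum_apply]]
  rw [Finset.sum_congr rfl fun j _ => lp_single_coord j (t j) i]
  exact Finset.sum_ite_eq F i t

lemma hasSum_sq (c : lp (fun _ : ι => ℝ) 2) : HasSum (fun i => (c i) ^ 2) (‖c‖ ^ 2) := by
  have := lp.hasSum_inner (𝕜 := ℝ) c c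
  rw [real_inner_self_eq_norm_sq] at this
  simpa [RCLike.inner_apply, sq] using this

lemma inner_lp_eq (f g : lp (fun _ : ι => ℝ) 2) : ⟪f, g⟫ = ∑' i, f i * g i := by
  rw [lp.inner_eq_tsum]
  simp [RCLike.inner_apply]
  exact tsum_congr fun i => mul_comm _ _

lemma inner_finlp [DecidableEq ι] (F : Finset ι) (t : ι → ℝ) (d : lp (fun _ : ι => ℝ) 2) :
    ⟪finlp F t, d⟫ = ∑ j ∈ F, t j * d j := by
  rw [inner_lp_eq]
  rw [tsum_eq_sum (s := F) (fun i hi => by rw [finlp_coord, if_neg hi, zero_mul])]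
  exact Finset.sum_congr rfl fun j hj => by rw [finlp_coord, if_pos hj]

lemma norm_finlp_sq [DecidableEq ι] (F : Finset ι) (t : ι → ℝ) :
    ‖finlp F t‖ ^ 2 = ∑ j ∈ F, t j ^ 2 := by
  rw [← real_inner_self_eq_norm_sq, inner_finlp]
  exact Finset.sum_congr rfl fun j hj => by rw [finlp_coord, if_pos hj, sq]

lemma tendsto_finlp [DecidableEq ι] (c : lp (fun _ : ι => ℝ) 2) :
    Filter.Tendsto (fun F : Finset ι => finlp F ⇑c) Filter.atTop (nhds c) :=
  lp.hasSum_single (by norm_num) c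

lemma hasSum_mem_closed {E : Type*} [NormedAddCommGroup E] [Module ℝ E] {ι' : Type*}
    {S : Submodule ℝ E} (hS : IsClosed (S : Set E)) {f : ι' → E} {x : E}
    (hf : HasSum f x) (hmem : ∀ i, f i ∈ S) : x ∈ S :=
  hS.mem_of_tendsto hf (Filter.Eventually.of_forall fun F => Submodule.sum_mem S fun i _ => hmem i)

end L2Helpers

section Synth

variable {ι : Type*} {E : Type*} [NormedAddCommGroup E] [InnerProductSpace ℝ E]

lemma synth_summable [CompleteSpace E] (v : ι → E) (M : ℝ) (hM : 0 ≤ M)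
    (hub : ∀ (F : Finset ι) (t : ι → ℝ), ‖∑ p ∈ F, t p • v p‖ ^ 2 ≤ M * ∑ p ∈ F, t p ^ 2)
    (c : lp (fun _ : ι => ℝ) 2) : Summable (fun p => c p • v p) := by
  rw [summable_iff_vanishing_norm]
  intro ε hε
  have hsq : Summable (fun i => (c i) ^ 2) := (hasSum_sq c).summable
  obtain ⟨s, hs⟩ := summable_iff_vanishing_norm.mp hsq (ε ^ 2 / (M + 1)) (by positivity)
  refine ⟨s, fun F hF => ?_⟩
  have h1 : ‖∑ p ∈ F, c p • v p‖ ^ 2 ≤ M * ∑ p ∈ F, (c p) ^ 2 := hub F ⇑c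
  have h2 := hs F hF
  rw [Real.norm_eq_abs] at h2
  have h3 : ∑ p ∈ F, (c p) ^ 2 < ε ^ 2 / (M + 1) := lt_of_le_of_lt (le_abs_self _) h2
  have h4 : (0:ℝ) ≤ ∑ p ∈ F, (c p) ^ 2 := Finset.sum_nonneg fun p _ => sq_nonneg _
  have hM1 : (0:ℝ) < M + 1 := by linarith
  have h5 : M * ∑ p ∈ F, (c p) ^ 2 < ε ^ 2 := by
    have : M * (ε ^ 2 / (M + 1)) < ε ^ 2 := by
      rw [div_eq_inv_mul, ← mul_assoc]
      have hlt : M * (M + 1)⁻¹ < 1 := by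
        rw [mul_inv_lt_iff₀ hM1]; linarith
      nlinarith [mul_pos (sub_pos.mpr hlt) (pow_pos hε 2)]
    have h6 : M * ∑ p ∈ F, (c p) ^ 2 ≤ M * (ε ^ 2 / (M + 1)) :=
      mul_le_mul_of_nonneg_left h3.le hM
    linarith
  nlinarith [norm_nonneg (∑ p ∈ F, c p • v p), h1, h5, hε]

lemma synth_norm_le (v : ι → E) (M : ℝ)
    (hub : ∀ (F : Finset ι) (t : ι → ℝ), ‖∑ p ∈ F, t p • v p‖ ^ 2 ≤ M * ∑ p ∈ F, t p ^ 2)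
    (c : lp (fun _ : ι => ℝ) 2) {x : E} (hx : HasSum (fun p => c p • v p) x) :
    ‖x‖ ^ 2 ≤ M * ‖c‖ ^ 2 := by
  have ht : Filter.Tendsto (fun F : Finset ι => ‖∑ p ∈ F, c p • v p‖ ^ 2)
      Filter.atTop (nhds (‖x‖ ^ 2)) := hx.norm.pow 2
  have hc2 : Filter.Tendsto (fun F : Finset ι => M * ∑ p ∈ F, (c p) ^ 2)
      Filter.atTop (nhds (M * ‖c‖ ^ 2)) := (hasSum_sq c).const_mul M
  exact le_of_tendsto_of_tendsto' ht hc2 fun F => hub F ⇑c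

lemma synth_norm_ge (v : ι → E) (α : ℝ)
    (hlb : ∀ (F : Finset ι) (t : ι → ℝ), α * ∑ p ∈ F, t p ^ 2 ≤ ‖∑ p ∈ F, t p • v p‖ ^ 2)
    (c : lp (fun _ : ι => ℝ) 2) {x : E} (hx : HasSum (fun p => c p • v p) x) :
    α * ‖c‖ ^ 2 ≤ ‖x‖ ^ 2 := by
  have ht : Filter.Tendsto (fun F : Finset ι => ‖∑ p ∈ F, c p • v p‖ ^ 2)
      Filter.atTop (nhds (‖x‖ ^ 2)) := hx.norm.pow 2
  have hc2 : Filter.Tendsto (fun F : Finset ι => α * ∑ p ∈ F, (c p) ^ 2)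
      Filter.atTop (nhds (α * ‖c‖ ^ 2)) := (hasSum_sq c).const_mul α
  exact le_of_tendsto_of_tendsto' hc2 ht fun F => hlb F ⇑c

lemma exists_synthCLM [CompleteSpace E] (v : ι → E) (M : ℝ) (hM : 0 ≤ M)
    (hub : ∀ (F : Finset ι) (t : ι → ℝ), ‖∑ p ∈ F, t p • v p‖ ^ 2 ≤ M * ∑ p ∈ F, t p ^ 2) :
    ∃ V : (lp (fun _ : ι => ℝ) 2) →L[ℝ] E, ∀ c, HasSum (fun p => c p • v p) (V c) := by
  have hsm : ∀ c : lp (fun _ : ι => ℝ) 2, Summable (fun p => c p • v p) :=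
    synth_summable v M hM hub
  refine ⟨LinearMap.mkContinuous
    { toFun := fun c => ∑' p, c p • v p
      map_add' := ?_
      map_smul' := ?_ } (Real.sqrt M) ?_, fun c => ?_⟩
  · intro c d
    have h3 : HasSum (fun p => (↑(c + d) : ∀ _ : ι, ℝ) p • v p)
        ((∑' p, c p • v p) + ∑' p, d p • v p) := by
      have := (hsm c).hasSum.add (hsm d).hasSum
      refine HasSum.congr_fun this fun p => ?_
      rw [lp.coeFn_add, Pi.add_apply, add_smul]
    exact h3.tsum_eq
  · intro r c
    have h1 := (hsm c).hasSum.const_smul r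
    have h3 : HasSum (fun p => (↑(r • c) : ∀ _ : ι, ℝ) p • v p) (r • ∑' p, c p • v p) := by
      refine HasSum.congr_fun h1 fun p => ?_
      rw [lp.coeFn_smul, Pi.smul_apply, smul_eq_mul, mul_smul]
    exact h3.tsum_eq
  · intro c
    have hb := synth_norm_le v M hub c (hsm c).hasSum
    have h0 : ‖∑' p, c p • v p‖ = Real.sqrt (‖∑' p, c p • v p‖ ^ 2) :=
      (Real.sqrt_sq (norm_nonneg _)).symm
    show ‖∑' p, c p • v p‖ ≤ Real.sqrt M * ‖c‖
    rw [h0]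
    calc Real.sqrt (‖∑' p, c p • v p‖ ^ 2) ≤ Real.sqrt (M * ‖c‖ ^ 2) :=
          Real.sqrt_le_sqrt hb
      _ = Real.sqrt M * ‖c‖ := by
          rw [Real.sqrt_mul hM, Real.sqrt_sq (norm_nonneg _)]
  · exact (hsm c).hasSum

end Synth

section Block

variable {E : Type*} [NormedAddCommGroup E] [InnerProductSpace ℝ E]

lemma block_bounds (G : ℕ → ℕ → ℝ) (α M : ℝ)
    (hl : ∀ (F : Finset ℕ) (t : ℕ → ℝ),
      α * ∑ j ∈ F, t j ^ 2 ≤ ∑ j ∈ F, ∑ j' ∈ F, (t j * t j') * G j j')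
    (hu : ∀ (F : Finset ℕ) (t : ℕ → ℝ),
      ∑ j ∈ F, ∑ j' ∈ F, (t j * t j') * G j j' ≤ M * ∑ j ∈ F, t j ^ 2)
    (F : Finset ℕ) (h : ℕ → E) :
    α * ∑ j ∈ F, ‖h j‖ ^ 2 ≤ ∑ j ∈ F, ∑ j' ∈ F, G j j' * ⟪h j, h j'⟫ ∧
      ∑ j ∈ F, ∑ j' ∈ F, G j j' * ⟪h j, h j'⟫ ≤ M * ∑ j ∈ F, ‖h j‖ ^ 2 := by
  classical
  set W := Submodule.span ℝ ((F.image h : Finset E) : Set E) with hW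
  haveI : FiniteDimensional ℝ W := FiniteDimensional.span_finset ℝ _
  set n := Module.finrank ℝ W with hn
  set b := stdOrthonormalBasis ℝ W with hb
  have hmem : ∀ j ∈ F, h j ∈ W := fun j hj =>
    Submodule.subset_span (by exact_mod_cast Finset.mem_image_of_mem h hj)
  set g : ℕ → W := fun j => if hj : j ∈ F then ⟨h j, hmem j hj⟩ else 0 with hg
  set t : Fin n → ℕ → ℝ := fun m j => ⟪g j, b m⟫ with ht
  have hinner : ∀ j ∈ F, ∀ j' ∈ F, ⟪h j, h j'⟫ = ∑ m : Fin n, t m j * t m j' := by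
    intro j hj j' hj'
    have h1 := b.sum_inner_mul_inner (g j) (g j')
    have h2 : ⟪g j, g j'⟫ = ⟪h j, h j'⟫ := by
      rw [Submodule.coe_inner]
      simp [hg, hj, hj']
    rw [h2] at h1
    rw [← h1]
    refine Finset.sum_congr rfl fun m _ => ?_
    show ⟪g j, b m⟫ * ⟪b m, g j'⟫ = ⟪g j, b m⟫ * ⟪g j', b m⟫
    congr 1
    exact real_inner_comm _ _
  have hnorm : ∀ j ∈ F, ‖h j‖ ^ 2 = ∑ m : Fin n, t m j ^ 2 := by
    intro j hj
    have := hinner j hj j hj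
    rw [real_inner_self_eq_norm_sq] at this
    rw [this]
    exact Finset.sum_congr rfl fun m _ => (sq _).symm
  have key : ∑ j ∈ F, ∑ j' ∈ F, G j j' * ⟪h j, h j'⟫
      = ∑ m : Fin n, ∑ j ∈ F, ∑ j' ∈ F, (t m j * t m j') * G j j' := by
    have step1 : ∑ j ∈ F, ∑ j' ∈ F, G j j' * ⟪h j, h j'⟫
        = ∑ j ∈ F, ∑ j' ∈ F, ∑ m : Fin n, (t m j * t m j') * G j j' := by
      refine Finset.sum_congr rfl fun j hj => Finset.sum_congr rfl fun j' hj' => ?_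
      rw [hinner j hj j' hj', mul_comm, Finset.sum_mul]
    rw [step1]
    rw [Finset.sum_congr rfl fun j _ => Finset.sum_comm (s := F) (t := (Finset.univ : Finset (Fin n)))
      (f := fun j' m => (t m j * t m j') * G j j')]
    exact Finset.sum_comm
  have hsum_norm : ∑ j ∈ F, ‖h j‖ ^ 2 = ∑ m : Fin n, ∑ j ∈ F, t m j ^ 2 := by
    rw [Finset.sum_congr rfl hnorm]
    exact Finset.sum_comm
  constructor
  · rw [key, hsum_norm, Finset.mul_sum]
    exact Finset.sum_le_sum fun m _ => hl F (t m)
  · rw [key, hsum_norm, Finset.mul_sum]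
    exact Finset.sum_le_sum fun m _ => hu F (t m)

end Block

section Tensor

variable {H1 : Type*} [NormedAddCommGroup H1] [InnerProductSpace ℝ H1]
variable {H2 : Type*} [NormedAddCommGroup H2] [InnerProductSpace ℝ H2]
variable {H : Type*} [NormedAddCommGroup H] [InnerProductSpace ℝ H]

lemma tensor_bounds (φ : H1 →ₗ[ℝ] H2 →ₗ[ℝ] H)
    (hφ1 : ∀ (f1 g1 : H1) (f2 g2 : H2), ⟪φ f1 f2, φ g1 g2⟫ = ⟪f1, g1⟫ * ⟪f2, g2⟫)
    (u : ℕ → H1) (w : ℕ → H2) {α1 M1 α2 M2 : ℝ}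
    (hα1 : 0 ≤ α1) (hM1 : 0 ≤ M1) (hα2 : 0 ≤ α2) (hM2 : 0 ≤ M2)
    (hu : ∀ (F : Finset ℕ) (t : ℕ → ℝ), α1 * ∑ j ∈ F, t j ^ 2 ≤ ‖∑ j ∈ F, t j • u j‖ ^ 2 ∧
      ‖∑ j ∈ F, t j • u j‖ ^ 2 ≤ M1 * ∑ j ∈ F, t j ^ 2)
    (hw : ∀ (F : Finset ℕ) (t : ℕ → ℝ), α2 * ∑ j ∈ F, t j ^ 2 ≤ ‖∑ j ∈ F, t j • w j‖ ^ 2 ∧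
      ‖∑ j ∈ F, t j • w j‖ ^ 2 ≤ M2 * ∑ j ∈ F, t j ^ 2)
    (F : Finset (ℕ × ℕ)) (t : ℕ × ℕ → ℝ) :
    α1 * α2 * ∑ p ∈ F, t p ^ 2 ≤ ‖∑ p ∈ F, t p • φ (u p.1) (w p.2)‖ ^ 2 ∧
      ‖∑ p ∈ F, t p • φ (u p.1) (w p.2)‖ ^ 2 ≤ M1 * M2 * ∑ p ∈ F, t p ^ 2 := by
  classical
  -- reduce to a product finset
  set t' : ℕ × ℕ → ℝ := fun p => if p ∈ F then t p else 0 with ht'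
  set F1 := F.image Prod.fst with hF1
  set F2 := F.image Prod.snd with hF2
  have hsub : F ⊆ F1 ×ˢ F2 := fun p hp => Finset.mem_product.mpr
    ⟨Finset.mem_image_of_mem _ hp, Finset.mem_image_of_mem _ hp⟩
  have hsum_eq : ∑ p ∈ F, t p • φ (u p.1) (w p.2)
      = ∑ p ∈ F1 ×ˢ F2, t' p • φ (u p.1) (w p.2) := by
    have h1 : ∑ p ∈ F, t p • φ (u p.1) (w p.2) = ∑ p ∈ F, t' p • φ (u p.1) (w p.2) :=
      Finset.sum_congr rfl fun p hp => by simp [ht', hp]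
    rw [h1]
    exact Finset.sum_subset hsub fun p _ hnp => by simp [ht', hnp]
  have hsq_eq : ∑ p ∈ F, t p ^ 2 = ∑ p ∈ F1 ×ˢ F2, t' p ^ 2 := by
    have h1 : ∑ p ∈ F, t p ^ 2 = ∑ p ∈ F, t' p ^ 2 :=
      Finset.sum_congr rfl fun p hp => by simp [ht', hp]
    rw [h1]
    exact Finset.sum_subset hsub fun p _ hnp => by simp [ht', hnp]
  rw [hsum_eq, hsq_eq]
  -- the fiber vectors
  set h : ℕ → H2 := fun j => ∑ k ∈ F2, t' (j, k) • w k with hh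
  have hrw : ∑ p ∈ F1 ×ˢ F2, t' p • φ (u p.1) (w p.2) = ∑ j ∈ F1, φ (u j) (h j) := by
    rw [Finset.sum_product]
    refine Finset.sum_congr rfl fun j _ => ?_
    rw [hh, map_sum]
    exact Finset.sum_congr rfl fun k _ => ((φ (u j)).map_smul _ _).symm
  have hexp : ‖∑ j ∈ F1, φ (u j) (h j)‖ ^ 2
      = ∑ j ∈ F1, ∑ j' ∈ F1, ⟪u j, u j'⟫ * ⟪h j, h j'⟫ := by
    rw [← real_inner_self_eq_norm_sq, sum_inner]
    refine Finset.sum_congr rfl fun j _ => ?_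
    rw [inner_sum]
    exact Finset.sum_congr rfl fun j' _ => hφ1 _ _ _ _
  have hbl := block_bounds (fun j j' => ⟪u j, u j'⟫) α1 M1
    (fun F t => by rw [← gram_expand]; exact (hu F t).1)
    (fun F t => by rw [← gram_expand]; exact (hu F t).2) F1 h
  have hfiber_low : ∀ j, α2 * ∑ k ∈ F2, t' (j, k) ^ 2 ≤ ‖h j‖ ^ 2 :=
    fun j => (hw F2 fun k => t' (j, k)).1
  have hfiber_up : ∀ j, ‖h j‖ ^ 2 ≤ M2 * ∑ k ∈ F2, t' (j, k) ^ 2 :=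
    fun j => (hw F2 fun k => t' (j, k)).2
  have hsq_prod : ∑ p ∈ F1 ×ˢ F2, t' p ^ 2 = ∑ j ∈ F1, ∑ k ∈ F2, t' (j, k) ^ 2 := by
    rw [Finset.sum_product]
  rw [hrw, hexp, hsq_prod]
  constructor
  · calc α1 * α2 * ∑ j ∈ F1, ∑ k ∈ F2, t' (j, k) ^ 2
        = α1 * ∑ j ∈ F1, α2 * ∑ k ∈ F2, t' (j, k) ^ 2 := by
          simp only [Finset.mul_sum]
          exact Finset.sum_congr rfl fun j _ => Finset.sum_congr rfl fun k _ => by ring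
      _ ≤ α1 * ∑ j ∈ F1, ‖h j‖ ^ 2 := by
          refine mul_le_mul_of_nonneg_left ?_ hα1
          exact Finset.sum_le_sum fun j _ => hfiber_low j
      _ ≤ ∑ j ∈ F1, ∑ j' ∈ F1, ⟪u j, u j'⟫ * ⟪h j, h j'⟫ := hbl.1
  · calc ∑ j ∈ F1, ∑ j' ∈ F1, ⟪u j, u j'⟫ * ⟪h j, h j'⟫
        ≤ M1 * ∑ j ∈ F1, ‖h j‖ ^ 2 := hbl.2
      _ ≤ M1 * ∑ j ∈ F1, M2 * ∑ k ∈ F2, t' (j, k) ^ 2 := by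
          refine mul_le_mul_of_nonneg_left ?_ hM1
          exact Finset.sum_le_sum fun j _ => hfiber_up j
      _ = M1 * M2 * ∑ j ∈ F1, ∑ k ∈ F2, t' (j, k) ^ 2 := by
          rw [← Finset.mul_sum, mul_assoc]

end Tensor

section Factor

variable {Hf : Type*} [NormedAddCommGroup Hf] [InnerProductSpace ℝ Hf] [CompleteSpace Hf]

lemma factor_data (u : ℕ → Hf)
    (T : lp (fun _ : ℕ => ℝ) 2 →L[ℝ] lp (fun _ : ℕ => ℝ) 2) (hTbij : Function.Bijective T)
    (hT : ∀ (c : lp (fun _ : ℕ => ℝ) 2) (j : ℕ), HasSum (fun m => ⟪u j, u m⟫ * c m) (T c j))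
    (a : ℕ → lp (fun _ : ℕ => ℝ) 2) (ha : ∀ i, T (a i) = lp.single 2 i 1)
    (L : ℕ → Hf) (hL : ∀ i, HasSum (fun m => a i m • u m) (L i)) :
    ∃ αu Mu αL ML : ℝ, 0 < αu ∧ 0 ≤ Mu ∧ 0 < αL ∧ 0 ≤ ML ∧
      (∀ (F : Finset ℕ) (t : ℕ → ℝ), αu * ∑ j ∈ F, t j ^ 2 ≤ ‖∑ j ∈ F, t j • u j‖ ^ 2 ∧
        ‖∑ j ∈ F, t j • u j‖ ^ 2 ≤ Mu * ∑ j ∈ F, t j ^ 2) ∧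
      (∀ (F : Finset ℕ) (t : ℕ → ℝ), αL * ∑ j ∈ F, t j ^ 2 ≤ ‖∑ j ∈ F, t j • L j‖ ^ 2 ∧
        ‖∑ j ∈ F, t j • L j‖ ^ 2 ≤ ML * ∑ j ∈ F, t j ^ 2) ∧
      (∀ j i, ⟪u j, L i⟫ = if j = i then 1 else 0) ∧
      (∀ j, HasSum (fun m => (T (lp.single 2 j 1)) m • L m) (u j)) := by
  classical
  -- coordinates of T on finitely supported elements
  have Tcoord : ∀ (F : Finset ℕ) (t : ℕ → ℝ) (j : ℕ),
      T (finlp F t) j = ∑ m ∈ F, ⟪u j, u m⟫ * t m := by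
    intro F t j
    rw [← (hT (finlp F t) j).tsum_eq,
      tsum_eq_sum (s := F) (fun m hm => by rw [finlp_coord, if_neg hm, mul_zero])]
    exact Finset.sum_congr rfl fun m hm => by rw [finlp_coord, if_pos hm]
  have quadT : ∀ (F : Finset ℕ) (t : ℕ → ℝ),
      ⟪finlp F t, T (finlp F t)⟫ = ‖∑ j ∈ F, t j • u j‖ ^ 2 := by
    intro F t
    rw [inner_finlp, gram_expand]
    refine Finset.sum_congr rfl fun j _ => ?_
    rw [Tcoord, Finset.mul_sum]
    exact Finset.sum_congr rfl fun m _ => by ring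
  -- positivity of T
  have Tpos : ∀ c, 0 ≤ ⟪c, T c⟫ := by
    intro c
    have h1 : Continuous fun x : lp (fun _ : ℕ => ℝ) 2 => ⟪x, T x⟫ :=
      continuous_id.inner T.continuous
    have hcont : Filter.Tendsto (fun F : Finset ℕ => ⟪finlp F ⇑c, T (finlp F ⇑c)⟫)
        Filter.atTop (nhds ⟪c, T c⟫) := (h1.tendsto c).comp (tendsto_finlp c)
    refine ge_of_tendsto hcont (Filter.Eventually.of_forall fun F => ?_)
    rw [quadT]
    positivity
  -- symmetry of T
  have hfin : ∀ (F G : Finset ℕ) (t s : ℕ → ℝ),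
      ⟪T (finlp F t), finlp G s⟫ = ⟪finlp F t, T (finlp G s)⟫ := by
    intro F G t s
    have l1 : ⟪T (finlp F t), finlp G s⟫ = ∑ m ∈ G, ∑ j ∈ F, (s m * t j) * ⟪u m, u j⟫ := by
      rw [real_inner_comm, inner_finlp]
      refine Finset.sum_congr rfl fun m _ => ?_
      rw [Tcoord, Finset.mul_sum]
      exact Finset.sum_congr rfl fun j _ => by ring
    have l2 : ⟪finlp F t, T (finlp G s)⟫ = ∑ j ∈ F, ∑ m ∈ G, (t j * s m) * ⟪u j, u m⟫ := by
      rw [inner_finlp]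
      refine Finset.sum_congr rfl fun j _ => ?_
      rw [Tcoord, Finset.mul_sum]
      exact Finset.sum_congr rfl fun m _ => by ring
    rw [l1, l2, Finset.sum_comm]
    exact Finset.sum_congr rfl fun m _ => Finset.sum_congr rfl fun j _ => by
      rw [real_inner_comm (u m) (u j)]; ring
  have hsemi : ∀ (G : Finset ℕ) (s : ℕ → ℝ) (c : lp (fun _ : ℕ => ℝ) 2),
      ⟪T c, finlp G s⟫ = ⟪c, T (finlp G s)⟫ := by
    intro G s c
    have h1 : Continuous fun x : lp (fun _ : ℕ => ℝ) 2 => ⟪T x, finlp G s⟫ :=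
      (T.continuous.inner continuous_const)
    have h2 : Continuous fun x : lp (fun _ : ℕ => ℝ) 2 => ⟪x, T (finlp G s)⟫ :=
      (continuous_id.inner continuous_const)
    have e1 := (h1.tendsto c).comp (tendsto_finlp c)
    have e2 := ((h2.tendsto c).comp (tendsto_finlp c)).congr
      (fun F => (hfin F G ⇑c s).symm)
    exact tendsto_nhds_unique e1 e2
  have Tsym : ∀ c d, ⟪T c, d⟫ = ⟪c, T d⟫ := by
    intro c d
    have h1 : Continuous fun y : lp (fun _ : ℕ => ℝ) 2 => ⟪T c, y⟫ :=
      continuous_const.inner continuous_id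
    have h2 : Continuous fun y : lp (fun _ : ℕ => ℝ) 2 => ⟪c, T y⟫ :=
      continuous_const.inner T.continuous
    have e1 := (h1.tendsto d).comp (tendsto_finlp d)
    have e2 := ((h2.tendsto d).comp (tendsto_finlp d)).congr
      (fun G => (hsemi G ⇑d c).symm)
    exact tendsto_nhds_unique e1 e2
  obtain ⟨αu, hαu, hTlow⟩ := pos_inv_lower T hTbij Tsym Tpos
  have hu : ∀ (F : Finset ℕ) (t : ℕ → ℝ), αu * ∑ j ∈ F, t j ^ 2 ≤ ‖∑ j ∈ F, t j • u j‖ ^ 2 ∧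
      ‖∑ j ∈ F, t j • u j‖ ^ 2 ≤ ‖T‖ * ∑ j ∈ F, t j ^ 2 := by
    intro F t
    constructor
    · have h := hTlow (finlp F t)
      rwa [quadT, norm_finlp_sq] at h
    · have h1 : ⟪finlp F t, T (finlp F t)⟫ ≤ ‖T‖ * ‖finlp F t‖ ^ 2 := by
        calc ⟪finlp F t, T (finlp F t)⟫ ≤ ‖finlp F t‖ * ‖T (finlp F t)‖ :=
              real_inner_le_norm _ _
          _ ≤ ‖finlp F t‖ * (‖T‖ * ‖finlp F t‖) := by
              have h2 := T.le_opNorm (finlp F t)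
              nlinarith [norm_nonneg (finlp F t)]
          _ = ‖T‖ * ‖finlp F t‖ ^ 2 := by ring
      rwa [quadT, norm_finlp_sq] at h1
  -- biorthogonality
  have biorth : ∀ j i, ⟪u j, L i⟫ = if j = i then 1 else 0 := by
    intro j i
    have h0 : HasSum (fun m => a i m * ⟪u j, u m⟫) ⟪u j, L i⟫ := by
      have := (hL i).mapL (innerSL ℝ (u j))
      simpa [innerSL_apply_apply, real_inner_smul_right] using this
    have h1' : HasSum (fun m => ⟪u j, u m⟫ * a i m) ⟪u j, L i⟫ :=
      h0.congr_fun fun m => mul_comm _ _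
    have h2 : HasSum (fun m => ⟪u j, u m⟫ * a i m) ((lp.single 2 i (1:ℝ) : lp (fun _ : ℕ => ℝ) 2) j) := by
      have := hT (a i) j
      rwa [ha i] at this
    rw [h1'.unique h2, lp_single_coord]
  -- the Gram matrix of L
  have LGram : ∀ i i', ⟪L i, L i'⟫ = a i' i := by
    intro i i'
    have h1 : HasSum (fun m => a i' m * ⟪L i, u m⟫) ⟪L i, L i'⟫ := by
      have := (hL i').mapL (innerSL ℝ (L i))
      simpa [innerSL_apply_apply, real_inner_smul_right] using this
    have h2 : (fun m => a i' m * ⟪L i, u m⟫) = fun m => if m = i then a i' m else 0 := by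
      funext m
      rw [real_inner_comm, biorth m i]
      split_ifs <;> ring
    rw [h2] at h1
    have h3 : HasSum (fun m => if m = i then a i' m else 0) (a i' i) := by
      have h4 := hasSum_single (f := fun m => if m = i then a i' m else 0) i
        (fun m hm => if_neg hm)
      simpa using h4
    exact h1.unique h3
  -- the inverse operator
  let eT := ContinuousLinearEquiv.ofBijective T (LinearMap.ker_eq_bot.mpr hTbij.1)
    (LinearMap.range_eq_top.mpr hTbij.2)
  have hecoe : (eT : lp (fun _ : ℕ => ℝ) 2 → lp (fun _ : ℕ => ℝ) 2) = T :=
    ContinuousLinearEquiv.coeFn_ofBijective T _ _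
  set B : lp (fun _ : ℕ => ℝ) 2 →L[ℝ] lp (fun _ : ℕ => ℝ) 2 :=
    (eT.symm : lp (fun _ : ℕ => ℝ) 2 ≃L[ℝ] lp (fun _ : ℕ => ℝ) 2).toContinuousLinearMap with hBdef
  have hTB : ∀ x, T (B x) = x := fun x => by
    rw [← congrFun hecoe (B x)]; exact eT.apply_symm_apply x
  have hBT : ∀ x, B (T x) = x := fun x => by
    rw [← congrFun hecoe x]; exact eT.symm_apply_apply x
  have hBbij : Function.Bijective B := eT.symm.bijective
  have Bsym : ∀ x y, ⟪B x, y⟫ = ⟪x, B y⟫ := by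
    intro x y
    conv_lhs => rw [← hTB y]
    rw [← Tsym, hTB]
  have Bpos : ∀ x, 0 ≤ ⟪x, B x⟫ := by
    intro x
    calc (0:ℝ) ≤ ⟪B x, T (B x)⟫ := Tpos (B x)
      _ = ⟪T (B x), B x⟫ := real_inner_comm _ _
      _ = ⟪x, B x⟫ := by rw [hTB]
  obtain ⟨αL, hαL, hBlow⟩ := pos_inv_lower B hBbij Bsym Bpos
  have haB : ∀ i, a i = B (lp.single 2 i 1) := fun i => by rw [← ha i, hBT]
  -- Gram of L as quadratic form of B
  have quadB : ∀ (F : Finset ℕ) (t : ℕ → ℝ),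
      ⟪finlp F t, B (finlp F t)⟫ = ‖∑ j ∈ F, t j • L j‖ ^ 2 := by
    intro F t
    have hBsum : B (finlp F t) = ∑ i' ∈ F, t i' • a i' := by
      rw [finlp, map_sum]
      refine Finset.sum_congr rfl fun i' _ => ?_
      rw [show (lp.single 2 i' (t i') : lp (fun _ : ℕ => ℝ) 2)
          = t i' • lp.single 2 i' 1 by
        rw [← lp.single_smul]; norm_num, map_smul, ← haB]
    have hBcoord : ∀ i0 : ℕ, (B (finlp F t)) i0 = ∑ i' ∈ F, t i' * a i' i0 := by
      intro i0
      rw [hBsum]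
      rw [show ((∑ i' ∈ F, t i' • a i' : lp (fun _ : ℕ => ℝ) 2) : ∀ _, ℝ) i0
          = ∑ i' ∈ F, ((t i' • a i' : lp (fun _ : ℕ => ℝ) 2) : ∀ _, ℝ) i0 by
        rw [lp.coeFn_sum, Finset.sum_apply]]
      exact Finset.sum_congr rfl fun i' _ => by
        rw [lp.coeFn_smul, Pi.smul_apply, smul_eq_mul]
    rw [inner_finlp, gram_expand]
    rw [Finset.sum_congr rfl fun i hi => by rw [hBcoord i, Finset.mul_sum]]
    refine Finset.sum_congr rfl fun i _ => Finset.sum_congr rfl fun i' _ => ?_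
    rw [LGram]; ring
  have hL2 : ∀ (F : Finset ℕ) (t : ℕ → ℝ), αL * ∑ j ∈ F, t j ^ 2 ≤ ‖∑ j ∈ F, t j • L j‖ ^ 2 ∧
      ‖∑ j ∈ F, t j • L j‖ ^ 2 ≤ ‖B‖ * ∑ j ∈ F, t j ^ 2 := by
    intro F t
    constructor
    · have h := hBlow (finlp F t)
      rwa [quadB, norm_finlp_sq] at h
    · have h1 : ⟪finlp F t, B (finlp F t)⟫ ≤ ‖B‖ * ‖finlp F t‖ ^ 2 := by
        calc ⟪finlp F t, B (finlp F t)⟫ ≤ ‖finlp F t‖ * ‖B (finlp F t)‖ :=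
              real_inner_le_norm _ _
          _ ≤ ‖finlp F t‖ * (‖B‖ * ‖finlp F t‖) := by
              have h2 := B.le_opNorm (finlp F t)
              nlinarith [norm_nonneg (finlp F t)]
          _ = ‖B‖ * ‖finlp F t‖ ^ 2 := by ring
      rwa [quadB, norm_finlp_sq] at h1
  -- reproducing property
  have repro : ∀ j, HasSum (fun m => (T (lp.single 2 j 1)) m • L m) (u j) := by
    intro j
    set bb := T (lp.single 2 j 1) with hbdef
    have hbcoord : ∀ m, bb m = ⟪u m, u j⟫ := by
      intro m
      have h1 := hT (lp.single 2 j 1) m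
      have h2 : HasSum (fun m' => ⟪u m, u m'⟫ * (lp.single 2 j (1:ℝ) : lp (fun _ : ℕ => ℝ) 2) m')
          ⟪u m, u j⟫ := by
        have h3 := hasSum_single
          (f := fun m' => ⟪u m, u m'⟫ * (lp.single 2 j (1:ℝ) : lp (fun _ : ℕ => ℝ) 2) m') j
          (fun m' hm' => by simp only [lp_single_coord, if_neg hm', mul_zero])
        simpa [lp_single_coord] using h3
      exact h1.unique h2
    have hsummable : Summable (fun m => bb m • L m) :=
      synth_summable L ‖B‖ (norm_nonneg _) (fun F t => (hL2 F t).2) bb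
    set x := ∑' m, bb m • L m with hx_def
    have hx : HasSum (fun m => bb m • L m) x := hsummable.hasSum
    set Su := (Submodule.span ℝ (Set.range u)).topologicalClosure with hSu
    have hSuclosed : IsClosed (Su : Set Hf) := Submodule.isClosed_topologicalClosure _
    have humem : ∀ i, u i ∈ Su := fun i =>
      Submodule.le_topologicalClosure _ (Submodule.subset_span ⟨i, rfl⟩)
    have hLmem : ∀ m, L m ∈ Su := fun m => hasSum_mem_closed hSuclosed (hL m)
      (fun i => Submodule.smul_mem _ _ (humem i))
    have hxmem : x ∈ Su := hasSum_mem_closed hSuclosed hx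
      (fun m => Submodule.smul_mem _ _ (hLmem m))
    have hinner : ∀ i, ⟪u i, x⟫ = ⟪u i, u j⟫ := by
      intro i
      have h1 : HasSum (fun m => bb m * ⟪u i, L m⟫) ⟪u i, x⟫ := by
        have := hx.mapL (innerSL ℝ (u i))
        simpa [innerSL_apply_apply, real_inner_smul_right] using this
      have h2 : (fun m => bb m * ⟪u i, L m⟫) = fun m => if m = i then bb m else 0 := by
        funext m
        rw [biorth i m]
        by_cases hmi : m = i
        · subst hmi; simp
        · rw [if_neg (fun h => hmi h.symm), if_neg hmi, mul_zero]
      rw [h2] at h1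
      have h3 : HasSum (fun m => if m = i then bb m else 0) (bb i) := by
        have h4 := hasSum_single (f := fun m => if m = i then bb m else 0) i
          (fun m hm => if_neg hm)
        simpa using h4
      rw [h1.unique h3, hbcoord]
    have hdmem : x - u j ∈ Su := Submodule.sub_mem _ hxmem (humem j)
    have hker : Su ≤ (innerSL ℝ (x - u j)).ker := by
      refine Submodule.topologicalClosure_minimal _ (Submodule.span_le.mpr ?_)
        (ContinuousLinearMap.isClosed_ker _)
      rintro y ⟨i, rfl⟩
      rw [SetLike.mem_coe, LinearMap.mem_ker, ContinuousLinearMap.coe_coe]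
      rw [show ((innerSL ℝ (x - u j)) (u i) : ℝ) = ⟪x - u j, u i⟫ from innerSL_apply_apply _ _ _]
      rw [real_inner_comm, inner_sub_right, hinner i, sub_self]
    have hd0 : x - u j = 0 := by
      have h5 := hker hdmem
      rw [LinearMap.mem_ker, ContinuousLinearMap.coe_coe] at h5
      rw [show ((innerSL ℝ (x - u j)) (x - u j) : ℝ) = ⟪x - u j, x - u j⟫ from
        innerSL_apply_apply _ _ _] at h5
      exact inner_self_eq_zero.mp h5
    have hxu : x = u j := by rwa [sub_eq_zero] at hd0
    exact hxu ▸ hx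
  exact ⟨αu, ‖T‖, αL, ‖B‖, hαu, norm_nonneg _, hαL, norm_nonneg _, hu, hL2, biorth, repro⟩

end Factor

section LowBound

lemma lowbound_antilip {E F : Type*} [NormedAddCommGroup E] [NormedAddCommGroup F]
    [NormedSpace ℝ E] [NormedSpace ℝ F] [CompleteSpace E]
    (V : E →L[ℝ] F) (α : ℝ) (hα : 0 < α) (hlow : ∀ c, α * ‖c‖ ^ 2 ≤ ‖V c‖ ^ 2) :
    IsClosed (Set.range V) ∧ Function.Injective V := by
  have hsp : 0 < Real.sqrt α := Real.sqrt_pos.mpr hα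
  have hnorm : ∀ c, ‖c‖ ≤ (Real.sqrt α)⁻¹ * ‖V c‖ := by
    intro c
    have h0 := hlow c
    have h1 : Real.sqrt α * ‖c‖ ≤ ‖V c‖ := by
      have h2 : (Real.sqrt α * ‖c‖) ^ 2 ≤ ‖V c‖ ^ 2 := by
        rw [mul_pow, Real.sq_sqrt hα.le]; exact h0
      nlinarith [norm_nonneg (V c), mul_nonneg (Real.sqrt_nonneg α) (norm_nonneg c)]
    calc ‖c‖ = (Real.sqrt α)⁻¹ * (Real.sqrt α * ‖c‖) := by field_simp
      _ ≤ (Real.sqrt α)⁻¹ * ‖V c‖ :=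
          mul_le_mul_of_nonneg_left h1 (inv_nonneg.mpr hsp.le)
  have hanti : AntilipschitzWith (⟨(Real.sqrt α)⁻¹, inv_nonneg.mpr hsp.le⟩ : NNReal) V :=
    V.antilipschitz_of_bound (fun x => hnorm x)
  refine ⟨hanti.isClosed_range V.uniformContinuous, fun c d hcd => ?_⟩
  have h3 := hnorm (c - d)
  rw [map_sub, hcd, sub_self, norm_zero, mul_zero] at h3
  have h4 : c - d = 0 := norm_le_zero_iff.mp h3
  exact sub_eq_zero.mp h4

end LowBound

set_option maxHeartbeats 2000000 in
/-- For determining sequences X, Y, the families (K₁(·,x_j)·K₂(·,y_k)) and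
(L_{1,j}·L_{2,k}) are dual Riesz bases of H_{K,X×Y}, where K is the tensor product
kernel, realized in H ≅ H_{K₁} ⊗ H_{K₂} via the product map φ with feature map
kk(x,y) = φ (k₁ x) (k₂ y). -/
theorem stmt_18 {d1 d2 : ℕ}
    (K1 : EuclideanSpace ℝ (Fin d1) → EuclideanSpace ℝ (Fin d1) → ℝ)
    (K2 : EuclideanSpace ℝ (Fin d2) → EuclideanSpace ℝ (Fin d2) → ℝ)
    (hK1 : IsPDKernel K1) (hK2 : IsPDKernel K2)
    {H1 : Type*} [NormedAddCommGroup H1] [InnerProductSpace ℝ H1] [CompleteSpace H1]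
    (k1 : EuclideanSpace ℝ (Fin d1) → H1) (hk1 : ∀ x y, ⟪k1 x, k1 y⟫ = K1 x y)
    (hdense1 : (Submodule.span ℝ (Set.range k1)).topologicalClosure = ⊤)
    {H2 : Type*} [NormedAddCommGroup H2] [InnerProductSpace ℝ H2] [CompleteSpace H2]
    (k2 : EuclideanSpace ℝ (Fin d2) → H2) (hk2 : ∀ x y, ⟪k2 x, k2 y⟫ = K2 x y)
    (hdense2 : (Submodule.span ℝ (Set.range k2)).topologicalClosure = ⊤)
    -- H realizes the Hilbert tensor product H_{K₁} ⊗ H_{K₂} ≅ H_K, with feature map kk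
    {H : Type*} [NormedAddCommGroup H] [InnerProductSpace ℝ H] [CompleteSpace H]
    (φ : H1 →ₗ[ℝ] H2 →ₗ[ℝ] H) (hφ : IsHilbertTensorProduct φ)
    (kk : EuclideanSpace ℝ (Fin d1) × EuclideanSpace ℝ (Fin d2) → H)
    (hkk : ∀ p, kk p = φ (k1 p.1) (k2 p.2))
    -- X and Y are determining sequences
    (X : ℕ → EuclideanSpace ℝ (Fin d1)) (hX : Function.Injective X)
    (Y : ℕ → EuclideanSpace ℝ (Fin d2)) (hY : Function.Injective Y)
    (T1 : lp (fun _ : ℕ => ℝ) 2 →L[ℝ] lp (fun _ : ℕ => ℝ) 2)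
    (hT1bij : Function.Bijective T1)
    (hT1 : ∀ (c : lp (fun _ : ℕ => ℝ) 2) (j : ℕ),
      HasSum (fun m => K1 (X j) (X m) * c m) (T1 c j))
    (T2 : lp (fun _ : ℕ => ℝ) 2 →L[ℝ] lp (fun _ : ℕ => ℝ) 2)
    (hT2bij : Function.Bijective T2)
    (hT2 : ∀ (c : lp (fun _ : ℕ => ℝ) 2) (j : ℕ),
      HasSum (fun m => K2 (Y j) (Y m) * c m) (T2 c j))
    -- the sampling (dual) functions L_{1,j} = Σ_n (A_{K₁,X}⁻¹ e_j)_n K₁(·,x_n),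
    -- and similarly L_{2,k}
    (a1 : ℕ → lp (fun _ : ℕ => ℝ) 2) (ha1 : ∀ i, T1 (a1 i) = lp.single 2 i 1)
    (L1 : ℕ → H1) (hL1 : ∀ i, HasSum (fun m => a1 i m • k1 (X m)) (L1 i))
    (a2 : ℕ → lp (fun _ : ℕ => ℝ) 2) (ha2 : ∀ i, T2 (a2 i) = lp.single 2 i 1)
    (L2 : ℕ → H2) (hL2 : ∀ i, HasSum (fun m => a2 i m • k2 (Y m)) (L2 i)) :
    IsRieszBasisOf
      ((Submodule.span ℝ (Set.range fun p : ℕ × ℕ => kk (X p.1, Y p.2))).topologicalClosure)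
      (fun p : ℕ × ℕ => kk (X p.1, Y p.2)) ∧
    IsRieszBasisOf
      ((Submodule.span ℝ (Set.range fun p : ℕ × ℕ => kk (X p.1, Y p.2))).topologicalClosure)
      (fun p : ℕ × ℕ => φ (L1 p.1) (L2 p.2)) ∧
    ∀ p q : ℕ × ℕ, ⟪kk (X p.1, Y p.2), φ (L1 q.1) (L2 q.2)⟫ = if p = q then 1 else 0 := by
  classical
  obtain ⟨hφinner, -⟩ := hφ
  set u1 : ℕ → H1 := fun m => k1 (X m) with hu1
  set u2 : ℕ → H2 := fun m => k2 (Y m) with hu2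
  have hT1' : ∀ (c : lp (fun _ : ℕ => ℝ) 2) (j : ℕ),
      HasSum (fun m => ⟪u1 j, u1 m⟫ * c m) (T1 c j) := fun c j =>
    (hT1 c j).congr_fun fun m => by rw [hk1]
  have hT2' : ∀ (c : lp (fun _ : ℕ => ℝ) 2) (j : ℕ),
      HasSum (fun m => ⟪u2 j, u2 m⟫ * c m) (T2 c j) := fun c j =>
    (hT2 c j).congr_fun fun m => by rw [hk2]
  obtain ⟨α1, M1, αL1, ML1, hα1, hM1, hαL1, hML1, hub1, hLb1, biorth1, repro1⟩ :=
    factor_data u1 T1 hT1bij hT1' a1 ha1 L1 hL1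
  obtain ⟨α2, M2, αL2, ML2, hα2, hM2, hαL2, hML2, hub2, hLb2, biorth2, repro2⟩ :=
    factor_data u2 T2 hT2bij hT2' a2 ha2 L2 hL2
  -- the bilinear map is bounded
  have hφnorm : ∀ (x : H1) (y : H2), ‖φ x y‖ = ‖x‖ * ‖y‖ := by
    intro x y
    have h1 : ‖φ x y‖ ^ 2 = (‖x‖ * ‖y‖) ^ 2 := by
      rw [← real_inner_self_eq_norm_sq, hφinner, real_inner_self_eq_norm_sq,
        real_inner_self_eq_norm_sq]
      ring
    nlinarith [norm_nonneg (φ x y), mul_nonneg (norm_nonneg x) (norm_nonneg y), h1]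
  set φc1 : H1 → H2 →L[ℝ] H := fun x => LinearMap.mkContinuous (φ x) ‖x‖
    (fun y => le_of_eq (hφnorm x y)) with hφc1def
  have hφc1 : ∀ (x : H1) (y : H2), φc1 x y = φ x y := fun x y => rfl
  set φc2 : H2 → H1 →L[ℝ] H := fun y => LinearMap.mkContinuous (φ.flip y) ‖y‖
    (fun x => le_of_eq (by rw [LinearMap.flip_apply, hφnorm]; ring)) with hφc2def
  have hφc2 : ∀ (y : H2) (x : H1), φc2 y x = φ x y := fun y x => rfl
  -- the two tensor-product families
  set v : ℕ × ℕ → H := fun p => φ (u1 p.1) (u2 p.2) with hv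
  set v' : ℕ × ℕ → H := fun p => φ (L1 p.1) (L2 p.2) with hv'
  have hvkk : ∀ p : ℕ × ℕ, kk (X p.1, Y p.2) = v p := fun p => by rw [hkk]
  set S := (Submodule.span ℝ
    (Set.range fun p : ℕ × ℕ => kk (X p.1, Y p.2))).topologicalClosure with hSdef
  have hSclosed : IsClosed (S : Set H) := Submodule.isClosed_topologicalClosure _
  haveI : CompleteSpace S := hSclosed.completeSpace_coe
  have hvmemS : ∀ p : ℕ × ℕ, v p ∈ S := fun p =>
    Submodule.le_topologicalClosure _ (Submodule.subset_span ⟨p, hvkk p⟩)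
  -- quadratic bounds for the two families
  have htb := tensor_bounds φ hφinner u1 u2 hα1.le hM1 hα2.le hM2 hub1 hub2
  have htb' := tensor_bounds φ hφinner L1 L2 hαL1.le hML1 hαL2.le hML2 hLb1 hLb2
  -- synthesis operators
  obtain ⟨V, hV⟩ := exists_synthCLM v (M1 * M2) (by positivity)
    (fun F t => (htb F t).2)
  obtain ⟨V', hV'⟩ := exists_synthCLM v' (ML1 * ML2) (by positivity)
    (fun F t => (htb' F t).2)
  have hVlow : ∀ c, α1 * α2 * ‖c‖ ^ 2 ≤ ‖V c‖ ^ 2 := fun c =>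
    synth_norm_ge v _ (fun F t => (htb F t).1) c (hV c)
  have hV'low : ∀ c, αL1 * αL2 * ‖c‖ ^ 2 ≤ ‖V' c‖ ^ 2 := fun c =>
    synth_norm_ge v' _ (fun F t => (htb' F t).1) c (hV' c)
  -- values on basis vectors
  have hsingle : ∀ (w : ℕ × ℕ → H) (W : lp (fun _ : ℕ × ℕ => ℝ) 2 →L[ℝ] H)
      (hW : ∀ c, HasSum (fun p => c p • w p) (W c)) (p : ℕ × ℕ),
      W (lp.single 2 p 1) = w p := by
    intro w W hW p
    have h2 : HasSum (fun q => (lp.single 2 p (1:ℝ) : lp (fun _ : ℕ × ℕ => ℝ) 2) q • w q)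
        (w p) := by
      have h3 := hasSum_single
        (f := fun q => (lp.single 2 p (1:ℝ) : lp (fun _ : ℕ × ℕ => ℝ) 2) q • w q) p
        (fun q hq => by simp only [lp_single_coord, if_neg hq, zero_smul])
      simpa [lp_single_coord] using h3
    exact (hW (lp.single 2 p 1)).unique h2
  have hVsingle := hsingle v V hV
  have hV'single := hsingle v' V' hV'
  -- closed ranges
  obtain ⟨hVclosed, hVinj⟩ := lowbound_antilip V (α1 * α2) (by positivity) hVlow
  obtain ⟨hV'closed, hV'inj⟩ := lowbound_antilip V' (αL1 * αL2) (by positivity) hV'low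
  -- membership of the dual family in S
  have hstep1 : ∀ (m k0 : ℕ), φ (u1 m) (L2 k0) ∈ S := by
    intro m k0
    have h1 : HasSum (fun n => a2 k0 n • v (m, n)) (φ (u1 m) (L2 k0)) := by
      have h2 := (hL2 k0).mapL (φc1 (u1 m))
      rw [hφc1] at h2
      refine h2.congr_fun fun n => ?_
      rw [map_smul]
      rfl
    exact hasSum_mem_closed hSclosed h1 fun n => Submodule.smul_mem _ _ (hvmemS (m, n))
  have hv'memS : ∀ p : ℕ × ℕ, v' p ∈ S := by
    intro p
    have h1 : HasSum (fun m => a1 p.1 m • φ (u1 m) (L2 p.2)) (φ (L1 p.1) (L2 p.2)) := by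
      have h2 := (hL1 p.1).mapL (φc2 (L2 p.2))
      rw [hφc2] at h2
      refine h2.congr_fun fun m => ?_
      rw [map_smul]
      rfl
    exact hasSum_mem_closed hSclosed h1 fun m => Submodule.smul_mem _ _ (hstep1 m p.2)
  -- V maps into S
  have hVmem : ∀ c, V c ∈ S := fun c =>
    hasSum_mem_closed hSclosed (hV c) fun p => Submodule.smul_mem _ _ (hvmemS p)
  have hV'mem : ∀ c, V' c ∈ S := fun c =>
    hasSum_mem_closed hSclosed (hV' c) fun p => Submodule.smul_mem _ _ (hv'memS p)
  -- kk generators in range of V'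
  have hkkrange' : ∀ p : ℕ × ℕ, v p ∈ V'.range := by
    rintro ⟨j, k⟩
    set b1 := T1 (lp.single 2 j 1) with hb1
    set b2 := T2 (lp.single 2 k 1) with hb2
    have hmem2 : Memℓp (fun q : ℕ × ℕ => b1 q.1 * b2 q.2) 2 := by
      apply memℓp_gen
      have hs1 : Summable (fun m => (b1 m) ^ 2) := (hasSum_sq b1).summable
      have hs2 : Summable (fun n => (b2 n) ^ 2) := (hasSum_sq b2).summable
      have hs3 := hs1.mul_of_nonneg hs2 (fun m => sq_nonneg _) (fun n => sq_nonneg _)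
      refine hs3.congr fun q => ?_
      rw [show ((2:ENNReal)).toReal = ((2:ℕ):ℝ) by norm_num, Real.rpow_natCast,
        Real.norm_eq_abs, sq_abs, mul_pow]
    set cc : lp (fun _ : ℕ × ℕ => ℝ) 2 := ⟨fun q : ℕ × ℕ => b1 q.1 * b2 q.2, hmem2⟩ with hcc
    have hccq : ∀ q : ℕ × ℕ, cc q = b1 q.1 * b2 q.2 := fun q => rfl
    have hccsum : HasSum (fun q : ℕ × ℕ => (b1 q.1 * b2 q.2) • v' q) (V' cc) := by
      refine (hV' cc).congr_fun fun q => by rw [hccq]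
    have hfibers : ∀ m, HasSum (fun n => (b1 m * b2 n) • v' (m, n))
        (b1 m • φ (L1 m) (u2 k)) := by
      intro m
      have h1 := (repro2 k).mapL (b1 m • φc1 (L1 m))
      refine h1.congr_fun fun n => ?_
      rw [ContinuousLinearMap.smul_apply, map_smul, smul_smul]
      rfl
    have houter : HasSum (fun m => b1 m • φ (L1 m) (u2 k)) (V' cc) :=
      hccsum.prod_fiberwise hfibers
    have hother : HasSum (fun m => b1 m • φ (L1 m) (u2 k)) (φ (u1 j) (u2 k)) := by
      have h1 := (repro1 j).mapL (φc2 (u2 k))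
      rw [hφc2] at h1
      refine h1.congr_fun fun m => ?_
      rw [map_smul, hφc2]
    exact ⟨cc, (houter.unique hother).symm ▸ rfl⟩
  -- ranges equal S
  have hrange_eq : ∀ (W : lp (fun _ : ℕ × ℕ => ℝ) 2 →L[ℝ] H),
      IsClosed (Set.range W) → (∀ c, W c ∈ S) → (∀ p : ℕ × ℕ, v p ∈ W.range) →
      W.range = S := by
    intro W hclosed hmem hgen
    apply le_antisymm
    · rintro y ⟨c, rfl⟩
      exact hmem c
    · refine Submodule.topologicalClosure_minimal _ (Submodule.span_le.mpr ?_) ?_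
      · rintro y ⟨p, rfl⟩
        rw [SetLike.mem_coe]
        have hgp := hgen p
        rw [← hvkk p] at hgp
        exact hgp
      · rw [LinearMap.coe_range]
        exact hclosed
  have hVrange : V.range = S := hrange_eq V hVclosed hVmem
    (fun p => ⟨lp.single 2 p 1, hVsingle p⟩)
  have hV'range : V'.range = S := hrange_eq V' hV'closed hV'mem hkkrange'
  -- build the equivalences
  have hbuild : ∀ (W : lp (fun _ : ℕ × ℕ => ℝ) 2 →L[ℝ] H), Function.Injective W →
      (∀ c, W c ∈ S) → W.range = S →
      ∃ T : (lp (fun _ : ℕ × ℕ => ℝ) 2) ≃L[ℝ] S,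
        ∀ p : ℕ × ℕ, (T (lp.single 2 p 1) : H) = W (lp.single 2 p 1) := by
    intro W hinj hmem hrange
    set Wr : lp (fun _ : ℕ × ℕ => ℝ) 2 →L[ℝ] S := W.codRestrict S hmem with hWr
    have hWrinj : Function.Injective Wr := by
      intro c d hcd
      exact hinj (congrArg Subtype.val hcd)
    have hWrsurj : Function.Surjective Wr := by
      rintro ⟨s, hs⟩
      rw [← hrange] at hs
      obtain ⟨c, hc⟩ := hs
      exact ⟨c, Subtype.ext hc⟩
    refine ⟨ContinuousLinearEquiv.ofBijective Wr (LinearMap.ker_eq_bot.mpr hWrinj)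
      (LinearMap.range_eq_top.mpr hWrsurj), fun p => ?_⟩
    rw [show (ContinuousLinearEquiv.ofBijective Wr (LinearMap.ker_eq_bot.mpr hWrinj)
      (LinearMap.range_eq_top.mpr hWrsurj)) (lp.single 2 p 1) = Wr (lp.single 2 p 1) from
      congrFun (ContinuousLinearEquiv.coeFn_ofBijective Wr _ _) _]
    rfl
  obtain ⟨TV, hTV⟩ := hbuild V hVinj hVmem hVrange
  obtain ⟨TV', hTV'⟩ := hbuild V' hV'inj hV'mem hV'range
  refine ⟨⟨fun p => by show kk (X p.1, Y p.2) ∈ S; rw [hvkk p]; exact hvmemS p, TV,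
      fun p => ?_⟩,
    ⟨fun p => hv'memS p, TV', fun p => ?_⟩, fun p q => ?_⟩
  · rw [hTV p, hVsingle p]
    exact (hvkk p).symm
  · rw [hTV' p, hV'single p]
  · rw [show kk (X p.1, Y p.2) = v p from hvkk p, hv, hφinner]
    rw [biorth1 p.1 q.1, biorth2 p.2 q.2]
    by_cases h1 : p.1 = q.1 <;> by_cases h2 : p.2 = q.2 <;>
      simp [Prod.ext_iff, h1, h2]
end
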